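/- arXiv:2005.02484 — 3 statements merged into one kernel-verified Lean document; each statement's English description precedes it below -/
import Mathlib

section
/- Let (X,T) be a TDS, μ a T-invariant ergodic Borel probability measure on X, and ε > 0. Then the function x ↦ μ(B_ε^FK(x)) is μ-almost everywhere equal to the constant (μ×μ)({(x,y) ∈ X×X : ρ_FK(x,y) ≤ ε}), and this constant is either 0 or 1. -/
open Filter Topology MeasureTheory Set

namespace FKPaper

variable {X : Type*} [MetricSpace X]

/-- The maximal fit of an `(n,δ)`-match between the orbits of `x` and `z` under `T`:
the largest cardinality of the domain of an order-preserving bijection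
`π : D → R`, with `D, R ⊆ {0,…,n-1}` and `dist (T^[i] x) (T^[π i] z) < δ` for `i ∈ D`. -/
noncomputable def maxFit (T : X → X) (δ : ℝ) (n : ℕ) (x z : X) : ℕ :=
  sSup {k : ℕ | ∃ i j : Fin k → ℕ, StrictMono i ∧ StrictMono j ∧
    (∀ s, i s < n) ∧ (∀ s, j s < n) ∧ ∀ s, dist (T^[i s] x) (T^[j s] z) < δ}

/-- `f̄_{n,δ}(x,z) = 1 - (maximal fit of an (n,δ)-match of x and z)/n`. -/
noncomputable def fbarN (T : X → X) (δ : ℝ) (n : ℕ) (x z : X) : ℝ :=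
  1 - (maxFit T δ n x z : ℝ) / n

/-- `f̄_δ(x,z) = limsup_{n→∞} f̄_{n,δ}(x,z)`. -/
noncomputable def fbar (T : X → X) (δ : ℝ) (x z : X) : ℝ :=
  Filter.limsup (fun n => fbarN T δ n x z) Filter.atTop

/-- The Feldman–Katok pseudometric `ρ_FK(x,z) = inf {δ > 0 : f̄_δ(x,z) < δ}`. -/
noncomputable def rhoFK (T : X → X) (x z : X) : ℝ :=
  sInf {δ : ℝ | 0 < δ ∧ fbar T δ x z < δ}

def MS (T : X → X) (δ : ℝ) (n : ℕ) (x z : X) : Set ℕ :=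
  {k : ℕ | ∃ i j : Fin k → ℕ, StrictMono i ∧ StrictMono j ∧
    (∀ s, i s < n) ∧ (∀ s, j s < n) ∧ ∀ s, dist (T^[i s] x) (T^[j s] z) < δ}

lemma maxFit_eq (T : X → X) (δ : ℝ) (n : ℕ) (x z : X) :
    maxFit T δ n x z = sSup (MS T δ n x z) := rfl

lemma zero_mem_MS (T : X → X) (δ : ℝ) (n : ℕ) (x z : X) : 0 ∈ MS T δ n x z := by
  refine ⟨Fin.elim0, Fin.elim0, ?_, ?_, ?_, ?_, ?_⟩ <;> exact fun s => s.elim0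

lemma le_of_mem_MS {T : X → X} {δ : ℝ} {n k : ℕ} {x z : X} (h : k ∈ MS T δ n x z) : k ≤ n := by
  obtain ⟨i, j, hi, hj, hin, hjn, hd⟩ := h
  have : Function.Injective (fun s : Fin k => (⟨i s, hin s⟩ : Fin n)) := by
    intro a b hab
    exact hi.injective (by simpa using congrArg Fin.val hab)
  simpa using Fintype.card_le_of_injective _ this

lemma bddAbove_MS (T : X → X) (δ : ℝ) (n : ℕ) (x z : X) : BddAbove (MS T δ n x z) :=
  ⟨n, fun _ hk => le_of_mem_MS hk⟩

lemma maxFit_mem (T : X → X) (δ : ℝ) (n : ℕ) (x z : X) : maxFit T δ n x z ∈ MS T δ n x z :=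
  Nat.sSup_mem ⟨0, zero_mem_MS T δ n x z⟩ (bddAbove_MS T δ n x z)

lemma le_maxFit {T : X → X} {δ : ℝ} {n k : ℕ} {x z : X} (h : k ∈ MS T δ n x z) :
    k ≤ maxFit T δ n x z := le_csSup (bddAbove_MS T δ n x z) h

lemma maxFit_le {T : X → X} {δ : ℝ} {n : ℕ} {x z : X} : maxFit T δ n x z ≤ n :=
  le_of_mem_MS (maxFit_mem T δ n x z)

lemma MS_down {T : X → X} {δ : ℝ} {n k m : ℕ} {x z : X} (hkm : k ≤ m)
    (h : m ∈ MS T δ n x z) : k ∈ MS T δ n x z := by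
  obtain ⟨i, j, hi, hj, hin, hjn, hd⟩ := h
  exact ⟨i ∘ Fin.castLE hkm, j ∘ Fin.castLE hkm,
    hi.comp (Fin.strictMono_castLE hkm), hj.comp (Fin.strictMono_castLE hkm),
    fun s => hin _, fun s => hjn _, fun s => hd _⟩

lemma MS_mono {T : X → X} {δ δ' : ℝ} {n : ℕ} {x z : X} (h : δ ≤ δ') :
    MS T δ n x z ⊆ MS T δ' n x z := by
  rintro k ⟨i, j, hi, hj, hin, hjn, hd⟩
  exact ⟨i, j, hi, hj, hin, hjn, fun s => lt_of_lt_of_le (hd s) h⟩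

lemma maxFit_mono {T : X → X} {δ δ' : ℝ} {n : ℕ} {x z : X} (h : δ ≤ δ') :
    maxFit T δ n x z ≤ maxFit T δ' n x z :=
  le_maxFit (MS_mono h (maxFit_mem T δ n x z))

lemma MS_symm {T : X → X} {δ : ℝ} {n k : ℕ} {x z : X} (h : k ∈ MS T δ n x z) :
    k ∈ MS T δ n z x := by
  obtain ⟨i, j, hi, hj, hin, hjn, hd⟩ := h
  exact ⟨j, i, hj, hi, hjn, hin, fun s => by rw [dist_comm]; exact hd s⟩

lemma maxFit_symm (T : X → X) (δ : ℝ) (n : ℕ) (x z : X) :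
    maxFit T δ n x z = maxFit T δ n z x :=
  le_antisymm (le_maxFit (MS_symm (maxFit_mem T δ n x z)))
    (le_maxFit (MS_symm (maxFit_mem T δ n z x)))



lemma strictMono_apply_le {k : ℕ} {j : Fin k → ℕ} (hj : StrictMono j) (s : Fin k) :
    (s : ℕ) ≤ j s := by
  obtain ⟨v, hv⟩ := s
  induction v with
  | zero => exact Nat.zero_le _
  | succ m ih =>
      have hm : m < k := Nat.lt_of_succ_lt hv
      have h1 : j ⟨m, hm⟩ < j ⟨m + 1, hv⟩ := hj (by simp [Fin.lt_def])
      exact Nat.lt_of_le_of_lt (ih hm) h1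

lemma shift_mem1 {T : X → X} {δ : ℝ} {n k : ℕ} {x y : X}
    (h : (k + 1) ∈ MS T δ n x y) : k ∈ MS T δ n x (T y) := by
  obtain ⟨i, j, hi, hj, hin, hjn, hd⟩ := h
  refine ⟨fun s => i s.succ, fun s => j s.succ - 1, ?_, ?_, ?_, ?_, ?_⟩
  · intro a b hab; exact hi (by simpa using hab)
  · intro a b hab
    have h1 : (1 : ℕ) ≤ j a.succ := le_trans (by simp [Fin.val_succ]) (strictMono_apply_le hj a.succ)
    exact Nat.sub_lt_sub_right h1 (hj (by simpa using hab))
  · intro s; exact hin _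
  · intro s; exact lt_of_le_of_lt (Nat.sub_le _ _) (hjn _)
  · intro s
    have h1 : (1 : ℕ) ≤ j s.succ := le_trans (by simp [Fin.val_succ]) (strictMono_apply_le hj s.succ)
    have h2 : j s.succ - 1 + 1 = j s.succ := Nat.succ_pred_eq_of_pos h1
    have := hd s.succ
    rwa [← h2, Function.iterate_succ_apply] at this

lemma shift_mem2 {T : X → X} {δ : ℝ} {n k : ℕ} {x y : X}
    (h : (k + 1) ∈ MS T δ n x (T y)) : k ∈ MS T δ n x y := by
  obtain ⟨i, j, hi, hj, hin, hjn, hd⟩ := h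
  refine ⟨fun s => i s.castSucc, fun s => j s.castSucc + 1, ?_, ?_, ?_, ?_, ?_⟩
  · intro a b hab; exact hi (by simpa using hab)
  · intro a b hab; exact Nat.add_lt_add_right (hj (by simpa using hab)) 1
  · intro s; exact hin _
  · intro s
    have h1 : j s.castSucc < j (Fin.last k) := hj (Fin.castSucc_lt_last s)
    exact lt_of_le_of_lt h1 (hjn _)
  · intro s
    have := hd s.castSucc
    rwa [← Function.iterate_succ_apply T (j s.castSucc) y] at this

lemma maxFit_le_shift {T : X → X} {δ : ℝ} {n : ℕ} {x y : X} :
    maxFit T δ n x y ≤ maxFit T δ n x (T y) + 1 := by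
  rcases Nat.eq_zero_or_pos (maxFit T δ n x y) with h | h
  · omega
  · obtain ⟨k, hk⟩ := Nat.exists_eq_add_of_lt h
    have hmem : (k + 1) ∈ MS T δ n x y := by
      have := maxFit_mem T δ n x y
      rwa [show maxFit T δ n x y = k + 1 by omega] at this
    have := le_maxFit (shift_mem1 hmem)
    omega

lemma shift_maxFit_le {T : X → X} {δ : ℝ} {n : ℕ} {x y : X} :
    maxFit T δ n x (T y) ≤ maxFit T δ n x y + 1 := by
  rcases Nat.eq_zero_or_pos (maxFit T δ n x (T y)) with h | h
  · omega
  · obtain ⟨k, hk⟩ := Nat.exists_eq_add_of_lt h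
    have hmem : (k + 1) ∈ MS T δ n x (T y) := by
      have := maxFit_mem T δ n x (T y)
      rwa [show maxFit T δ n x (T y) = k + 1 by omega] at this
    have := le_maxFit (shift_mem2 hmem)
    omega

lemma fbarN_nonneg (T : X → X) (δ : ℝ) (n : ℕ) (x z : X) : 0 ≤ fbarN T δ n x z := by
  rcases Nat.eq_zero_or_pos n with h | h
  · subst h; simp [fbarN]
  · have h1 : (maxFit T δ n x z : ℝ) / n ≤ 1 := by
      rw [div_le_one (by exact_mod_cast h)]
      exact_mod_cast maxFit_le
    simp only [fbarN]; linarith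

lemma fbarN_le_one (T : X → X) (δ : ℝ) (n : ℕ) (x z : X) : fbarN T δ n x z ≤ 1 := by
  have : (0:ℝ) ≤ (maxFit T δ n x z : ℝ) / n := by positivity
  simp only [fbarN]; linarith

lemma fbarN_shift1 {T : X → X} {δ : ℝ} {n : ℕ} {x y : X} (hn : 1 ≤ n) :
    fbarN T δ n x y ≤ fbarN T δ n x (T y) + 1 / n := by
  have h : (maxFit T δ n x (T y) : ℝ) ≤ maxFit T δ n x y + 1 := by
    exact_mod_cast shift_maxFit_le
  have hn' : (0:ℝ) < n := by exact_mod_cast hn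
  have h2 : (maxFit T δ n x (T y) : ℝ) / n ≤ (maxFit T δ n x y : ℝ) / n + 1 / n := by
    rw [← add_div, div_le_div_iff₀ hn' hn']
    nlinarith
  simp only [fbarN]; linarith

lemma fbarN_shift2 {T : X → X} {δ : ℝ} {n : ℕ} {x y : X} (hn : 1 ≤ n) :
    fbarN T δ n x (T y) ≤ fbarN T δ n x y + 1 / n := by
  have h : (maxFit T δ n x y : ℝ) ≤ maxFit T δ n x (T y) + 1 := by
    exact_mod_cast maxFit_le_shift
  have hn' : (0:ℝ) < n := by exact_mod_cast hn
  have h2 : (maxFit T δ n x y : ℝ) / n ≤ (maxFit T δ n x (T y) : ℝ) / n + 1 / n := by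
    rw [← add_div, div_le_div_iff₀ hn' hn']
    nlinarith
  simp only [fbarN]; linarith

lemma limsup_le_of_le_add {a b : ℕ → ℝ} (ha0 : ∀ n, 0 ≤ a n) (hb1 : ∀ n, b n ≤ 1)
    (h : ∀ n, 1 ≤ n → a n ≤ b n + 1 / n) :
    Filter.limsup a Filter.atTop ≤ Filter.limsup b Filter.atTop := by
  have hbb : Filter.IsBoundedUnder (· ≤ ·) Filter.atTop b :=
    Filter.isBoundedUnder_of ⟨1, hb1⟩
  have hca : Filter.IsCoboundedUnder (· ≤ ·) Filter.atTop a :=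
    Filter.isCoboundedUnder_le_of_eventually_le Filter.atTop
      (x := 0) (Filter.Eventually.of_forall ha0)
  by_contra hcon
  push_neg at hcon
  set A := Filter.limsup a Filter.atTop
  set L := Filter.limsup b Filter.atTop
  have h1 : ∀ᶠ n in Filter.atTop, b n < L + (A - L) / 4 :=
    Filter.eventually_lt_of_limsup_lt (by simp only [L]; linarith) hbb
  have h2 : ∀ᶠ n : ℕ in Filter.atTop, 1 / (n : ℝ) < (A - L) / 4 :=
    tendsto_one_div_atTop_nhds_zero_nat.eventually_lt_const (by linarith)
  have h3 : ∀ᶠ n in Filter.atTop, a n ≤ L + (A - L) / 2 := by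
    filter_upwards [h1, h2, Filter.eventually_ge_atTop 1] with n hb hninv h1n
    have := h n h1n; linarith
  have := Filter.limsup_le_of_le hca h3
  simp only [A] at this
  linarith

lemma fbar_shift (T : X → X) (δ : ℝ) (x y : X) : fbar T δ x (T y) = fbar T δ x y := by
  refine le_antisymm ?_ ?_
  · exact limsup_le_of_le_add (fun n => fbarN_nonneg T δ n x (T y))
      (fun n => fbarN_le_one T δ n x y) (fun n hn => fbarN_shift2 hn)
  · exact limsup_le_of_le_add (fun n => fbarN_nonneg T δ n x y)
      (fun n => fbarN_le_one T δ n x (T y)) (fun n hn => fbarN_shift1 hn)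

lemma fbar_symm (T : X → X) (δ : ℝ) (x z : X) : fbar T δ x z = fbar T δ z x := by
  simp only [fbar, fbarN, maxFit_symm T δ _ x z]

lemma fbarN_anti {T : X → X} {δ δ' : ℝ} (h : δ ≤ δ') (n : ℕ) (x z : X) :
    fbarN T δ' n x z ≤ fbarN T δ n x z := by
  have h1 : (maxFit T δ n x z : ℝ) ≤ maxFit T δ' n x z := by
    exact_mod_cast maxFit_mono h
  have h2 : (maxFit T δ n x z : ℝ) / n ≤ (maxFit T δ' n x z : ℝ) / n := by
    rcases Nat.eq_zero_or_pos n with hn | hn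
    · subst hn; simp
    · gcongr
  simp only [fbarN]; linarith

lemma fbar_anti {T : X → X} {δ δ' : ℝ} (h : δ ≤ δ') (x z : X) :
    fbar T δ' x z ≤ fbar T δ x z := by
  refine Filter.limsup_le_limsup (Filter.Eventually.of_forall fun n => fbarN_anti h n x z) ?_ ?_
  · exact Filter.isCoboundedUnder_le_of_eventually_le Filter.atTop
      (x := 0) (Filter.Eventually.of_forall fun n => fbarN_nonneg T δ' n x z)
  · exact Filter.isBoundedUnder_of ⟨1, fun n => fbarN_le_one T δ n x z⟩

section Compact
variable [CompactSpace X]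

lemma fbar_big (T : X → X) (x z : X) :
    fbar T (Metric.diam (Set.univ : Set X) + 1) x z = 0 := by
  set δ₀ := Metric.diam (Set.univ : Set X) + 1 with hδ₀
  have hfb : ∀ n : ℕ, 1 ≤ n → fbarN T δ₀ n x z = 0 := by
    intro n hn
    have hmem : n ∈ MS T δ₀ n x z := by
      refine ⟨Fin.val, Fin.val, Fin.val_strictMono, Fin.val_strictMono,
        fun s => s.isLt, fun s => s.isLt, fun s => ?_⟩
      have hb : Bornology.IsBounded (Set.univ : Set X) := isCompact_univ.isBounded
      have := Metric.dist_le_diam_of_mem hb (Set.mem_univ (T^[(s:ℕ)] x)) (Set.mem_univ (T^[(s:ℕ)] z))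
      linarith
    have h1 : maxFit T δ₀ n x z = n := le_antisymm maxFit_le (le_maxFit hmem)
    have hn' : (0:ℝ) < n := by exact_mod_cast hn
    simp [fbarN, h1, div_self (ne_of_gt hn')]
  have : fbar T δ₀ x z = Filter.limsup (fun _ : ℕ => (0:ℝ)) Filter.atTop := by
    apply Filter.limsup_congr
    filter_upwards [Filter.eventually_ge_atTop 1] with n hn
    exact hfb n hn
  rw [this, Filter.limsup_const]

lemma rho_set_nonempty (T : X → X) (x z : X) :
    {δ : ℝ | 0 < δ ∧ fbar T δ x z < δ}.Nonempty := by
  refine ⟨Metric.diam (Set.univ : Set X) + 1, ?_, ?_⟩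
  · have := Metric.diam_nonneg (s := (Set.univ : Set X)); linarith
  · rw [fbar_big]
    have := Metric.diam_nonneg (s := (Set.univ : Set X)); linarith

lemma rho_set_bddBelow (T : X → X) (x z : X) :
    BddBelow {δ : ℝ | 0 < δ ∧ fbar T δ x z < δ} :=
  ⟨0, fun δ hδ => le_of_lt hδ.1⟩

lemma rhoFK_le_iff {T : X → X} {x z : X} {ε : ℝ} (hε : 0 < ε) :
    rhoFK T x z ≤ ε ↔ ∀ q : ℚ, ε < (q : ℝ) → fbar T (q : ℝ) x z < q := by
  constructor
  · intro h q hq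
    obtain ⟨δ, hδ, hδq⟩ := exists_lt_of_csInf_lt (rho_set_nonempty T x z)
      (lt_of_le_of_lt h hq)
    exact lt_trans (lt_of_le_of_lt (fbar_anti (le_of_lt hδq) x z) hδ.2) hδq
  · intro h
    by_contra hcon
    push_neg at hcon
    obtain ⟨q, hq1, hq2⟩ := exists_rat_btwn hcon
    have hqmem : (q : ℝ) ∈ {δ : ℝ | 0 < δ ∧ fbar T δ x z < δ} :=
      ⟨lt_trans hε hq1, h q hq1⟩
    exact absurd (csInf_le (rho_set_bddBelow T x z) hqmem) (not_le_of_gt hq2)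

end Compact

lemma rhoFK_shift (T : X → X) (x y : X) : rhoFK T x (T y) = rhoFK T x y := by
  simp only [rhoFK, fbar_shift]

lemma rhoFK_symm (T : X → X) (x z : X) : rhoFK T x z = rhoFK T z x := by
  simp only [rhoFK, fbar_symm]

lemma rhoFK_shift_left (T : X → X) (x y : X) : rhoFK T (T x) y = rhoFK T x y := by
  rw [rhoFK_symm T (T x) y, rhoFK_shift, rhoFK_symm]

section Meas
variable [CompactSpace X] [MeasurableSpace X] [BorelSpace X]

lemma isOpen_MS_mem (T : X → X) (hT : Continuous T) (δ : ℝ) (n k : ℕ) :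
    IsOpen {p : X × X | k ∈ MS T δ n p.1 p.2} := by
  have heq : {p : X × X | k ∈ MS T δ n p.1 p.2} =
      ⋃ (i : Fin k → ℕ) (j : Fin k → ℕ)
        (_ : StrictMono i ∧ StrictMono j ∧ (∀ s, i s < n) ∧ (∀ s, j s < n)),
        ⋂ (s : Fin k), {p : X × X | dist (T^[i s] p.1) (T^[j s] p.2) < δ} := by
    ext p
    simp only [MS, Set.mem_setOf_eq, Set.mem_iUnion, Set.mem_iInter]
    constructor
    · rintro ⟨i, j, h1, h2, h3, h4, h5⟩; exact ⟨i, j, ⟨h1, h2, h3, h4⟩, h5⟩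
    · rintro ⟨i, j, ⟨h1, h2, h3, h4⟩, h5⟩; exact ⟨i, j, h1, h2, h3, h4, h5⟩
  rw [heq]
  refine isOpen_iUnion fun i => isOpen_iUnion fun j => isOpen_iUnion fun _ =>
    isOpen_iInter_of_finite fun s => ?_
  exact isOpen_lt (Continuous.dist ((hT.iterate _).comp continuous_fst)
    ((hT.iterate _).comp continuous_snd)) continuous_const

lemma measurable_maxFit (T : X → X) (hT : Continuous T) (δ : ℝ) (n : ℕ) :
    Measurable (fun p : X × X => maxFit T δ n p.1 p.2) := by
  apply measurable_to_countable'
  intro k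
  have heq : (fun p : X × X => maxFit T δ n p.1 p.2) ⁻¹' {k} =
      {p : X × X | k ∈ MS T δ n p.1 p.2} \ {p : X × X | (k + 1) ∈ MS T δ n p.1 p.2} := by
    ext p
    simp only [Set.mem_preimage, Set.mem_singleton_iff, Set.mem_diff, Set.mem_setOf_eq]
    constructor
    · rintro rfl
      refine ⟨maxFit_mem _ _ _ _ _, fun hmem => ?_⟩
      have := le_maxFit hmem; omega
    · rintro ⟨h1, h2⟩
      have hle := le_maxFit h1
      have hlt : maxFit T δ n p.1 p.2 < k + 1 := by
        by_contra hc; push_neg at hc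
        exact h2 (MS_down hc (maxFit_mem _ _ _ _ _))
      omega
  rw [heq]
  exact ((isOpen_MS_mem T hT δ n k).measurableSet).diff
    ((isOpen_MS_mem T hT δ n (k + 1)).measurableSet)

lemma measurable_fbarN (T : X → X) (hT : Continuous T) (δ : ℝ) (n : ℕ) :
    Measurable (fun p : X × X => fbarN T δ n p.1 p.2) := by
  simp only [fbarN]
  exact measurable_const.sub
    (((measurable_from_nat.comp (measurable_maxFit T hT δ n))).div_const _)

lemma measurableSet_fbar_lt (T : X → X) (hT : Continuous T) (c : ℝ) :
    MeasurableSet {p : X × X | fbar T c p.1 p.2 < c} := by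
  have heq : {p : X × X | fbar T c p.1 p.2 < c} =
      ⋃ (r : ℚ) (_ : (r : ℝ) < c) (N : ℕ), ⋂ (n : ℕ) (_ : N ≤ n),
        {p : X × X | fbarN T c n p.1 p.2 ≤ (r : ℝ)} := by
    ext p
    simp only [Set.mem_setOf_eq, Set.mem_iUnion, Set.mem_iInter]
    constructor
    · intro h
      obtain ⟨r, hr1, hr2⟩ := exists_rat_btwn h
      have hev : ∀ᶠ n in Filter.atTop, fbarN T c n p.1 p.2 < (r : ℝ) :=
        Filter.eventually_lt_of_limsup_lt hr1
          (Filter.isBoundedUnder_of ⟨1, fun n => fbarN_le_one T c n p.1 p.2⟩)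
      obtain ⟨N, hN⟩ := Filter.eventually_atTop.mp hev
      exact ⟨r, hr2, N, fun n hn => le_of_lt (hN n hn)⟩
    · rintro ⟨r, hr, N, hN⟩
      have hle : fbar T c p.1 p.2 ≤ (r : ℝ) :=
        Filter.limsup_le_of_le
          (Filter.isCoboundedUnder_le_of_eventually_le Filter.atTop (x := 0)
            (Filter.Eventually.of_forall fun n => fbarN_nonneg T c n p.1 p.2))
          (Filter.eventually_atTop.mpr ⟨N, fun n hn => hN n hn⟩)
      exact lt_of_le_of_lt hle hr
  rw [heq]
  refine MeasurableSet.iUnion fun r => MeasurableSet.iUnion fun _ =>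
    MeasurableSet.iUnion fun N => MeasurableSet.iInter fun n => MeasurableSet.iInter fun _ => ?_
  exact measurableSet_le (measurable_fbarN T hT c n) measurable_const

lemma measurableSet_rho_le (T : X → X) (hT : Continuous T)
    {ε : ℝ} (hε : 0 < ε) :
    MeasurableSet {p : X × X | rhoFK T p.1 p.2 ≤ ε} := by
  have heq : {p : X × X | rhoFK T p.1 p.2 ≤ ε} =
      ⋂ (q : ℚ) (_ : ε < (q : ℝ)), {p : X × X | fbar T (q : ℝ) p.1 p.2 < (q : ℝ)} := by
    ext p
    simp only [Set.mem_setOf_eq, Set.mem_iInter]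
    exact rhoFK_le_iff hε
  rw [heq]
  exact MeasurableSet.iInter fun q => MeasurableSet.iInter fun _ =>
    measurableSet_fbar_lt T hT _

end Meas


end FKPaper

open FKPaper Filter Topology MeasureTheory Set

set_option maxHeartbeats 1000000 in
/-- `x ↦ μ(B_ε^FK(x))` is `μ`-a.e. equal to the constant
`(μ×μ)({ρ_FK ≤ ε})`, which is `0` or `1`. -/
theorem measure_FKball_ae_const {X : Type*} [MetricSpace X] [CompactSpace X] [Nonempty X]
    (T : X → X) (hT : Continuous T) [MeasurableSpace X] [BorelSpace X]
    (μ : Measure X) [IsProbabilityMeasure μ] (hμ : Ergodic T μ)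
    (ε : ℝ) (hε : 0 < ε) :
    (∀ᵐ x ∂μ, μ {y : X | rhoFK T x y ≤ ε} =
        (μ.prod μ) {p : X × X | rhoFK T p.1 p.2 ≤ ε}) ∧
    ((μ.prod μ) {p : X × X | rhoFK T p.1 p.2 ≤ ε} = 0 ∨
      (μ.prod μ) {p : X × X | rhoFK T p.1 p.2 ≤ ε} = 1) := by
  have hA : MeasurableSet {p : X × X | rhoFK T p.1 p.2 ≤ ε} := measurableSet_rho_le T hT hε
  set A := {p : X × X | rhoFK T p.1 p.2 ≤ ε} with hAdef
  have hBeq : ∀ x : X, {y : X | rhoFK T x y ≤ ε} = Prod.mk x ⁻¹' A := by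
    intro x; ext y
    simp only [hAdef, Set.mem_setOf_eq, Set.mem_preimage]
  have hBmeas : ∀ x : X, MeasurableSet (Prod.mk x ⁻¹' A) := fun x =>
    hA.preimage measurable_prodMk_left
  have hBinv0 : ∀ x : X, T ⁻¹' {y : X | rhoFK T x y ≤ ε} = {y : X | rhoFK T x y ≤ ε} := by
    intro x; ext y
    simp only [Set.mem_preimage, Set.mem_setOf_eq, rhoFK_shift]
  have h01 : ∀ x : X, μ (Prod.mk x ⁻¹' A) = 0 ∨ μ (Prod.mk x ⁻¹' A) = 1 := by
    intro x
    rw [← hBeq x]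
    refine hμ.toPreErgodic.prob_eq_zero_or_one ?_ (hBinv0 x)
    rw [hBeq x]; exact hBmeas x
  set g : X → ENNReal := fun x => μ (Prod.mk x ⁻¹' A) with hg
  have hgmeas : Measurable g := measurable_measure_prodMk_left hA
  have hgT : ∀ x, g (T x) = g x := by
    intro x
    simp only [hg]
    congr 1
    ext y
    simp only [hAdef, Set.mem_preimage, Set.mem_setOf_eq, rhoFK_shift_left]
  have hprod : (μ.prod μ) A = ∫⁻ x, g x ∂μ := by
    rw [Measure.prod_apply hA]
  set S := {x : X | g x = 1} with hS
  have hSmeas : MeasurableSet S := hgmeas (measurableSet_singleton 1)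
  have hSinv : T ⁻¹' S = S := by
    ext x; simp only [hS, Set.mem_preimage, Set.mem_setOf_eq, hgT]
  rcases hμ.toPreErgodic.prob_eq_zero_or_one hSmeas hSinv with hS0 | hS1
  · have hae : ∀ᵐ x ∂μ, g x = 0 := by
      have h1 : ∀ᵐ x ∂μ, x ∉ S := by
        rw [ae_iff]
        simpa using hS0
      filter_upwards [h1] with x hx
      rcases h01 x with h | h
      · exact h
      · exact absurd h hx
    have hint : ∫⁻ x, g x ∂μ = 0 := by
      rw [lintegral_congr_ae hae, lintegral_zero]
    constructor
    · filter_upwards [hae] with x hx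
      rw [hBeq x, hprod, hint]
      exact hx
    · left; rw [hprod, hint]
  · have hcompl : μ Sᶜ = 0 := by
      rw [measure_compl hSmeas (measure_ne_top μ S), hS1, measure_univ, tsub_self]
    have hae : ∀ᵐ x ∂μ, g x = 1 := by
      have h1 : ∀ᵐ x ∂μ, x ∈ S := by
        rw [ae_iff]
        exact hcompl
      filter_upwards [h1] with x hx
      exact hx
    have hint : ∫⁻ x, g x ∂μ = 1 := by
      rw [lintegral_congr_ae hae, lintegral_one, measure_univ]
    constructor
    · filter_upwards [hae] with x hx
      rw [hBeq x, hprod, hint]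
      exact hx
    · right; rw [hprod, hint]
end

section
/- Let (X,T) be a TDS, μ a T-invariant ergodic Borel probability measure on X, and M ⊆ X a Borel set such that ρ_FK(x,y) = 0 for every x,y ∈ M. Then for every τ > 0 there exist N ∈ ℕ and a Borel set M₀ ⊆ M with μ(M \ M₀) < τ such that for every x,y ∈ M₀ and every n ≥ N one has f̄_{n,τ}(x,y) ≤ τ. -/
open Filter Topology MeasureTheory Set

open FKPaper Filter Topology MeasureTheory Set

namespace FKProof

set_option linter.unusedSectionVars false
set_option linter.unusedVariables false

variable {X : Type*} [MetricSpace X]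

/-- The set of achievable fits. -/
def matchSet (T : X → X) (δ : ℝ) (n : ℕ) (x z : X) : Set ℕ :=
  {k : ℕ | ∃ i j : Fin k → ℕ, StrictMono i ∧ StrictMono j ∧
    (∀ s, i s < n) ∧ (∀ s, j s < n) ∧ ∀ s, dist (T^[i s] x) (T^[j s] z) < δ}

lemma maxFit_def (T : X → X) (δ : ℝ) (n : ℕ) (x z : X) :
    maxFit T δ n x z = sSup (matchSet T δ n x z) := rfl

lemma zero_mem_matchSet (T : X → X) (δ : ℝ) (n : ℕ) (x z : X) :
    0 ∈ matchSet T δ n x z :=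
  ⟨fun s => s.elim0, fun s => s.elim0, fun s => s.elim0, fun s => s.elim0,
    fun s => s.elim0, fun s => s.elim0, fun s => s.elim0⟩

lemma matchSet_le (T : X → X) (δ : ℝ) (n : ℕ) (x z : X) {k : ℕ}
    (hk : k ∈ matchSet T δ n x z) : k ≤ n := by
  obtain ⟨i, j, hi, hj, hin, hjn, hd⟩ := hk
  calc k = (Finset.univ : Finset (Fin k)).card := by simp
  _ ≤ (Finset.range n).card :=
      Finset.card_le_card_of_injOn i (fun s _ => Finset.mem_range.2 (hin s))
        (hi.injective.injOn)
  _ = n := Finset.card_range n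

lemma bddAbove_matchSet (T : X → X) (δ : ℝ) (n : ℕ) (x z : X) :
    BddAbove (matchSet T δ n x z) :=
  ⟨n, fun _ hk => matchSet_le T δ n x z hk⟩

lemma le_maxFit (T : X → X) (δ : ℝ) (n : ℕ) (x z : X) {k : ℕ}
    (hk : k ∈ matchSet T δ n x z) : k ≤ maxFit T δ n x z :=
  le_csSup (bddAbove_matchSet T δ n x z) hk

lemma maxFit_le (T : X → X) (δ : ℝ) (n : ℕ) (x z : X) : maxFit T δ n x z ≤ n :=
  csSup_le ⟨0, zero_mem_matchSet T δ n x z⟩ (fun _ hk => matchSet_le T δ n x z hk)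

lemma maxFit_mem (T : X → X) (δ : ℝ) (n : ℕ) (x z : X) :
    maxFit T δ n x z ∈ matchSet T δ n x z :=
  Nat.sSup_mem ⟨0, zero_mem_matchSet T δ n x z⟩ (bddAbove_matchSet T δ n x z)

lemma le_maxFit_iff (T : X → X) (δ : ℝ) (n : ℕ) (x z : X) {k : ℕ} :
    k ≤ maxFit T δ n x z ↔ k ∈ matchSet T δ n x z := by
  constructor
  · intro h
    obtain ⟨i, j, hi, hj, hin, hjn, hd⟩ := maxFit_mem T δ n x z
    exact ⟨i ∘ Fin.castLE h, j ∘ Fin.castLE h,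
      hi.comp (Fin.strictMono_castLE h), hj.comp (Fin.strictMono_castLE h),
      fun s => hin _, fun s => hjn _, fun s => hd _⟩
  · exact le_maxFit T δ n x z

lemma matchSet_symm (T : X → X) (δ : ℝ) (n : ℕ) (x z : X) :
    matchSet T δ n x z = matchSet T δ n z x := by
  ext k
  constructor <;> rintro ⟨i, j, hi, hj, hin, hjn, hd⟩ <;>
    exact ⟨j, i, hj, hi, hjn, hin, fun s => by rw [dist_comm]; exact hd s⟩

lemma maxFit_symm (T : X → X) (δ : ℝ) (n : ℕ) (x z : X) :
    maxFit T δ n x z = maxFit T δ n z x := by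
  rw [maxFit_def, maxFit_def, matchSet_symm]

lemma fbarN_symm (T : X → X) (δ : ℝ) (n : ℕ) (x z : X) :
    fbarN T δ n x z = fbarN T δ n z x := by
  rw [fbarN, fbarN, maxFit_symm]

lemma maxFit_mono (T : X → X) {δ δ' : ℝ} (h : δ ≤ δ') (n : ℕ) (x z : X) :
    maxFit T δ n x z ≤ maxFit T δ' n x z := by
  refine csSup_le_csSup (bddAbove_matchSet T δ' n x z) ⟨0, zero_mem_matchSet T δ n x z⟩ ?_
  rintro k ⟨i, j, hi, hj, hin, hjn, hd⟩
  exact ⟨i, j, hi, hj, hin, hjn, fun s => lt_of_lt_of_le (hd s) h⟩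

/-- Composing two matches. -/
lemma matchSet_comp (T : X → X) {δ₁ δ₂ : ℝ} {n k₁ k₂ : ℕ} {x p y : X}
    (h1 : k₁ ∈ matchSet T δ₁ n x p) (h2 : k₂ ∈ matchSet T δ₂ n p y) :
    ∃ m ∈ matchSet T (δ₁ + δ₂) n x y, k₁ + k₂ ≤ n + m := by
  classical
  obtain ⟨i, j, hi, hj, hin, hjn, hd⟩ := h1
  obtain ⟨i', j', hi', hj', hin', hjn', hd'⟩ := h2
  refine ⟨((Finset.image j Finset.univ) ∩ (Finset.image i' Finset.univ)).card, ?_, ?_⟩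
  · set S : Finset ℕ := (Finset.image j Finset.univ) ∩ (Finset.image i' Finset.univ) with hS
    set m := S.card with hm
    set e := S.orderIsoOfFin rfl with he
    have heS : ∀ t : Fin m, (e t : ℕ) ∈ S := fun t => (e t).2
    have hchoiceR : ∀ t : Fin m, ∃ s : Fin k₁, j s = (e t : ℕ) := by
      intro t
      have := (Finset.mem_inter.1 (heS t)).1
      obtain ⟨s, _, hs⟩ := Finset.mem_image.1 this
      exact ⟨s, hs⟩
    have hchoiceD : ∀ t : Fin m, ∃ s : Fin k₂, i' s = (e t : ℕ) := by
      intro t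
      have := (Finset.mem_inter.1 (heS t)).2
      obtain ⟨s, _, hs⟩ := Finset.mem_image.1 this
      exact ⟨s, hs⟩
    choose σ hσ using hchoiceR
    choose ρ hρ using hchoiceD
    refine ⟨fun t => i (σ t), fun t => j' (ρ t), ?_, ?_, fun t => hin _, fun t => hjn' _, ?_⟩
    · intro t t' htt
      have h : (e t : ℕ) < (e t' : ℕ) := e.strictMono htt
      have hσlt : σ t < σ t' := by
        rw [← hj.lt_iff_lt, hσ, hσ]; exact h
      exact hi hσlt
    · intro t t' htt
      have h : (e t : ℕ) < (e t' : ℕ) := e.strictMono htt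
      have hρlt : ρ t < ρ t' := by
        rw [← hi'.lt_iff_lt, hρ, hρ]; exact h
      exact hj' hρlt
    · intro t
      calc dist (T^[i (σ t)] x) (T^[j' (ρ t)] y)
          ≤ dist (T^[i (σ t)] x) (T^[(e t : ℕ)] p)
            + dist (T^[(e t : ℕ)] p) (T^[j' (ρ t)] y) := dist_triangle _ _ _
        _ < δ₁ + δ₂ := by
            refine add_lt_add ?_ ?_
            · rw [← hσ t]; exact hd (σ t)
            · rw [← hρ t]; exact hd' (ρ t)
  · have hcardR : (Finset.image j Finset.univ).card = k₁ := by
      rw [Finset.card_image_of_injective _ hj.injective, Finset.card_univ, Fintype.card_fin]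
    have hcardD : (Finset.image i' Finset.univ).card = k₂ := by
      rw [Finset.card_image_of_injective _ hi'.injective, Finset.card_univ, Fintype.card_fin]
    have hsub : (Finset.image j Finset.univ) ∪ (Finset.image i' Finset.univ)
        ⊆ Finset.range n := by
      intro a ha
      rcases Finset.mem_union.1 ha with ha | ha
      · obtain ⟨s, _, rfl⟩ := Finset.mem_image.1 ha
        exact Finset.mem_range.2 (hjn s)
      · obtain ⟨s, _, rfl⟩ := Finset.mem_image.1 ha
        exact Finset.mem_range.2 (hin' s)
    have h1 := Finset.card_union_add_card_inter (Finset.image j Finset.univ)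
      (Finset.image i' Finset.univ)
    have h2 : ((Finset.image j Finset.univ) ∪ (Finset.image i' Finset.univ)).card ≤ n := by
      simpa using Finset.card_le_card hsub
    omega

/-- The key composition ("triangle") inequality for maximal fits. -/
lemma maxFit_triangle (T : X → X) (δ₁ δ₂ : ℝ) (n : ℕ) (x p y : X) :
    maxFit T δ₁ n x p + maxFit T δ₂ n p y ≤ n + maxFit T (δ₁ + δ₂) n x y := by
  obtain ⟨m, hm, hcard⟩ := matchSet_comp T (maxFit_mem T δ₁ n x p) (maxFit_mem T δ₂ n p y)
  have := le_maxFit T (δ₁ + δ₂) n x y hm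
  omega

lemma fbarN_nonneg (T : X → X) (δ : ℝ) (n : ℕ) (x z : X) : 0 ≤ fbarN T δ n x z := by
  rw [fbarN, sub_nonneg]
  rcases Nat.eq_zero_or_pos n with rfl | hn
  · simp
  · rw [div_le_one (by exact_mod_cast hn)]
    exact_mod_cast maxFit_le T δ n x z

lemma fbarN_le_one (T : X → X) (δ : ℝ) (n : ℕ) (x z : X) : fbarN T δ n x z ≤ 1 := by
  rw [fbarN]
  have : (0:ℝ) ≤ (maxFit T δ n x z : ℝ) / n := by positivity
  linarith

lemma fbarN_anti (T : X → X) {δ δ' : ℝ} (h : δ ≤ δ') (n : ℕ) (x z : X) :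
    fbarN T δ' n x z ≤ fbarN T δ n x z := by
  rw [fbarN, fbarN]
  have : (maxFit T δ n x z : ℝ) ≤ (maxFit T δ' n x z : ℝ) := by
    exact_mod_cast maxFit_mono T h n x z
  gcongr

lemma fbarN_triangle (T : X → X) (δ₁ δ₂ : ℝ) {n : ℕ} (hn : 0 < n) (x p y : X) :
    fbarN T (δ₁ + δ₂) n x y ≤ fbarN T δ₁ n x p + fbarN T δ₂ n p y := by
  have h := maxFit_triangle T δ₁ δ₂ n x p y
  have hcast : (maxFit T δ₁ n x p : ℝ) + (maxFit T δ₂ n p y : ℝ)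
      ≤ (n : ℝ) + (maxFit T (δ₁ + δ₂) n x y : ℝ) := by exact_mod_cast h
  have hn0 : (0:ℝ) < n := by exact_mod_cast hn
  have h1 : ((maxFit T δ₁ n x p : ℝ) + (maxFit T δ₂ n p y : ℝ)) / n
      ≤ ((n : ℝ) + (maxFit T (δ₁ + δ₂) n x y : ℝ)) / n := by gcongr
  rw [add_div, add_div, div_self hn0.ne'] at h1
  rw [fbarN, fbarN, fbarN]
  linarith

lemma isBoundedUnder_fbarN (T : X → X) (δ : ℝ) (x z : X) :
    IsBoundedUnder (· ≤ ·) atTop (fun n => fbarN T δ n x z) :=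
  isBoundedUnder_of ⟨1, fun n => fbarN_le_one T δ n x z⟩

lemma isCoboundedUnder_fbarN (T : X → X) (δ : ℝ) (x z : X) :
    IsCoboundedUnder (· ≤ ·) atTop (fun n => fbarN T δ n x z) :=
  isCoboundedUnder_le_of_le atTop fun n => fbarN_nonneg T δ n x z

lemma fbar_le_one (T : X → X) (δ : ℝ) (x z : X) : fbar T δ x z ≤ 1 :=
  limsup_le_of_le (isCoboundedUnder_fbarN T δ x z)
    (Eventually.of_forall fun n => fbarN_le_one T δ n x z)

lemma fbar_anti (T : X → X) {δ δ' : ℝ} (h : δ ≤ δ') (x z : X) :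
    fbar T δ' x z ≤ fbar T δ x z :=
  limsup_le_limsup (Eventually.of_forall fun n => fbarN_anti T h n x z)
    (isCoboundedUnder_fbarN T δ' x z) (isBoundedUnder_fbarN T δ x z)

lemma fbar_lt_of_rhoFK_eq_zero (T : X → X) {x z : X} (h : rhoFK T x z = 0)
    {ε : ℝ} (hε : 0 < ε) : fbar T ε x z < ε := by
  have hne : {δ : ℝ | 0 < δ ∧ fbar T δ x z < δ}.Nonempty :=
    ⟨2, by norm_num, lt_of_le_of_lt (fbar_le_one T 2 x z) (by norm_num)⟩
  have hlt : sInf {δ : ℝ | 0 < δ ∧ fbar T δ x z < δ} < ε := by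
    rw [rhoFK] at h; rw [h]; exact hε
  obtain ⟨δ, ⟨hδpos, hδ⟩, hδε⟩ := exists_lt_of_csInf_lt hne hlt
  calc fbar T ε x z ≤ fbar T δ x z := fbar_anti T hδε.le x z
    _ < δ := hδ
    _ < ε := hδε

section Measurability

variable [CompactSpace X] [MeasurableSpace X] [BorelSpace X]

lemma isOpen_le_maxFit (T : X → X) (hT : Continuous T) (δ : ℝ) (n k : ℕ) (p : X) :
    IsOpen {x : X | k ≤ maxFit T δ n x p} := by
  have : {x : X | k ≤ maxFit T δ n x p} =
      ⋃ (i : Fin k → ℕ) (j : Fin k → ℕ) (_ : StrictMono i) (_ : StrictMono j)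
        (_ : ∀ s, i s < n) (_ : ∀ s, j s < n),
          {x : X | ∀ s, dist (T^[i s] x) (T^[j s] p) < δ} := by
    ext x
    simp only [mem_setOf_eq, mem_iUnion]
    rw [le_maxFit_iff]
    constructor
    · rintro ⟨i, j, hi, hj, hin, hjn, hd⟩
      exact ⟨i, j, hi, hj, hin, hjn, hd⟩
    · rintro ⟨i, j, hi, hj, hin, hjn, hd⟩
      exact ⟨i, j, hi, hj, hin, hjn, hd⟩
  rw [this]
  refine isOpen_iUnion fun i => isOpen_iUnion fun j => isOpen_iUnion fun _ =>
    isOpen_iUnion fun _ => isOpen_iUnion fun _ => isOpen_iUnion fun _ => ?_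
  have : {x : X | ∀ s, dist (T^[i s] x) (T^[j s] p) < δ} =
      ⋂ s, {x : X | dist (T^[i s] x) (T^[j s] p) < δ} := by
    ext x; simp [mem_iInter]
  rw [this]
  exact isOpen_iInter_of_finite fun s =>
    isOpen_lt (Continuous.dist (hT.iterate _) continuous_const) continuous_const

lemma measurable_maxFit (T : X → X) (hT : Continuous T) (δ : ℝ) (n : ℕ) (p : X) :
    Measurable fun x => maxFit T δ n x p := by
  apply measurable_to_countable'
  intro k
  have : (fun x => maxFit T δ n x p) ⁻¹' {k}
      = {x : X | k ≤ maxFit T δ n x p} \ {x : X | k + 1 ≤ maxFit T δ n x p} := by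
    ext x; simp only [mem_preimage, mem_singleton_iff, mem_diff, mem_setOf_eq]; omega
  rw [this]
  exact ((isOpen_le_maxFit T hT δ n k p).measurableSet).diff
    ((isOpen_le_maxFit T hT δ n (k+1) p).measurableSet)

lemma measurable_fbarN (T : X → X) (hT : Continuous T) (δ : ℝ) (n : ℕ) (p : X) :
    Measurable fun x => fbarN T δ n x p := by
  have h1 : Measurable fun x => ((maxFit T δ n x p : ℕ) : ℝ) :=
    (measurable_from_top).comp (measurable_maxFit T hT δ n p)
  exact (measurable_const.sub (h1.div_const _))

end Measurability

end FKProof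

open FKProof

/-- on a set where `ρ_FK` vanishes, the matching is uniform off a
small set (Lemma 1 of the paper). -/
theorem uniform_match_on_rhoFK_null_set {X : Type*} [MetricSpace X] [CompactSpace X] [Nonempty X]
    (T : X → X) (hT : Continuous T) [MeasurableSpace X] [BorelSpace X]
    (μ : Measure X) [IsProbabilityMeasure μ] (hμ : Ergodic T μ)
    (M : Set X) (hM : MeasurableSet M)
    (h0 : ∀ x ∈ M, ∀ y ∈ M, rhoFK T x y = 0) :
    ∀ τ > (0 : ℝ), ∃ N : ℕ, ∃ M₀ : Set X, MeasurableSet M₀ ∧ M₀ ⊆ M ∧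
      μ (M \ M₀) < ENNReal.ofReal τ ∧
      ∀ x ∈ M₀, ∀ y ∈ M₀, ∀ n ≥ N, fbarN T τ n x y ≤ τ := by
  intro τ hτ
  rcases M.eq_empty_or_nonempty with rfl | ⟨p, hp⟩
  · refine ⟨0, ∅, MeasurableSet.empty, subset_rfl, ?_, by simp⟩
    simp [ENNReal.ofReal_pos.2 hτ]
  · set δ : ℝ := τ / 2 with hδdef
    have hδ : 0 < δ := by positivity
    -- the good sets
    set A : ℕ → Set X := fun N => {x : X | ∀ n, N ≤ n → fbarN T δ n x p ≤ δ} with hA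
    have hAmeas : ∀ N, MeasurableSet (A N) := by
      intro N
      have : A N = ⋂ (n : ℕ) (_ : N ≤ n), {x : X | fbarN T δ n x p ≤ δ} := by
        ext x; simp [hA, mem_iInter]
      rw [this]
      exact MeasurableSet.iInter fun n => MeasurableSet.iInter fun _ =>
        measurableSet_le (measurable_fbarN T hT δ n p) measurable_const
    have hAmono : Monotone A := by
      intro N N' hNN x hx n hn
      exact hx n (le_trans hNN hn)
    have hcover : ∀ x ∈ M, ∃ N, x ∈ A N := by
      intro x hx
      have h1 : fbar T δ x p < δ := fbar_lt_of_rhoFK_eq_zero T (h0 x hx p hp) hδ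
      have h2 : ∀ᶠ n in atTop, fbarN T δ n x p < δ :=
        eventually_lt_of_limsup_lt h1 (isBoundedUnder_fbarN T δ x p)
      obtain ⟨N, hN⟩ := eventually_atTop.1 h2
      exact ⟨N, fun n hn => (hN n hn).le⟩
    -- the bad sets shrink to ∅ in measure
    set E : ℕ → Set X := fun N => M \ (M ∩ A N) with hE
    have hEmeas : ∀ N, MeasurableSet (E N) := fun N => hM.diff (hM.inter (hAmeas N))
    have hEanti : Antitone E := by
      intro N N' hNN
      exact diff_subset_diff_right (inter_subset_inter_right M (hAmono hNN))
    have hEempty : ⋂ N, E N = ∅ := by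
      ext x
      simp only [mem_iInter, mem_empty_iff_false, iff_false, not_forall]
      by_cases hxM : x ∈ M
      · obtain ⟨N, hN⟩ := hcover x hxM
        exact ⟨N, fun h => h.2 ⟨hxM, hN⟩⟩
      · exact ⟨0, fun h => hxM h.1⟩
    have htend : Tendsto (fun N => μ (E N)) atTop (𝓝 (μ (⋂ N, E N))) :=
      tendsto_measure_iInter_atTop (fun N => (hEmeas N).nullMeasurableSet) hEanti
        ⟨0, measure_ne_top μ _⟩
    rw [hEempty, measure_empty] at htend
    have hev : ∀ᶠ N in atTop, μ (E N) < ENNReal.ofReal τ :=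
      htend.eventually_lt_const (ENNReal.ofReal_pos.2 hτ)
    obtain ⟨N, hN⟩ := hev.exists
    refine ⟨N + 1, M ∩ A N, hM.inter (hAmeas N), inter_subset_left, hN, ?_⟩
    intro x hx y hy n hn
    have hn0 : 0 < n := Nat.lt_of_lt_of_le (Nat.succ_pos N) hn
    have hnN : N ≤ n := le_trans (Nat.le_succ N) hn
    have hxp : fbarN T δ n x p ≤ δ := hx.2 n hnN
    have hyp : fbarN T δ n p y ≤ δ := by
      rw [fbarN_symm]; exact hy.2 n hnN
    have htri := fbarN_triangle T δ δ hn0 x p y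
    have : δ + δ = τ := by rw [hδdef]; ring
    calc fbarN T τ n x y = fbarN T (δ + δ) n x y := by rw [this]
      _ ≤ fbarN T δ n x p + fbarN T δ n p y := htri
      _ ≤ δ + δ := add_le_add hxp hyp
      _ = τ := this
end

section
/- Every topologically loosely Kronecker TDS is uniquely ergodic: if (X,T) is a TDS with ρ_FK(x,y) = 0 for all x,y ∈ X, then there is exactly one T-invariant Borel probability measure on X. -/
open Filter Topology MeasureTheory Set

open FKPaper Filter Topology MeasureTheory Set
open scoped Classical ENNReal NNReal BoundedContinuousFunction

set_option linter.unusedSectionVars false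




open FKPaper

namespace FKAux

variable {X : Type*} [MetricSpace X] [CompactSpace X] [Nonempty X]

/-- number of visits of the orbit of `x₀` to `S` before time `n` -/
noncomputable def vis (T : X → X) (x₀ : X) (S : Set X) (n : ℕ) : ℕ :=
  ((Finset.range n).filter (fun i => T^[i] x₀ ∈ S)).card

/-- visit frequency of the orbit of `x₀` in `S` up to time `n` -/
noncomputable def cnt (T : X → X) (x₀ : X) (S : Set X) (n : ℕ) : ℝ :=
  (vis T x₀ S n : ℝ) / n

lemma vis_le (T : X → X) (x₀ : X) (S : Set X) (n : ℕ) : vis T x₀ S n ≤ n := by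
  simpa [vis] using Finset.card_filter_le (Finset.range n) _

lemma vis_mono (T : X → X) (x₀ : X) {S S' : Set X} (h : S ⊆ S') (n : ℕ) :
    vis T x₀ S n ≤ vis T x₀ S' n :=
  Finset.card_le_card (Finset.monotone_filter_right _ (fun i _ hi => h hi))

lemma vis_union_le (T : X → X) (x₀ : X) (S S' : Set X) (n : ℕ) :
    vis T x₀ (S ∪ S') n ≤ vis T x₀ S n + vis T x₀ S' n := by
  unfold vis
  refine le_trans (Finset.card_le_card ?_) (Finset.card_union_le
    ((Finset.range n).filter (fun i => T^[i] x₀ ∈ S))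
    ((Finset.range n).filter (fun i => T^[i] x₀ ∈ S')))
  intro i hi
  simp only [Finset.mem_filter, Finset.mem_union, Set.mem_union] at hi ⊢
  tauto

lemma vis_add_le_of_disjoint (T : X → X) (x₀ : X) {S₁ S₂ S : Set X}
    (hd : Disjoint S₁ S₂) (h1 : S₁ ⊆ S) (h2 : S₂ ⊆ S) (n : ℕ) :
    vis T x₀ S₁ n + vis T x₀ S₂ n ≤ vis T x₀ S n := by
  unfold vis
  have hdisj : Disjoint ((Finset.range n).filter (fun i => T^[i] x₀ ∈ S₁))
      ((Finset.range n).filter (fun i => T^[i] x₀ ∈ S₂)) := by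
    rw [Finset.disjoint_filter]
    intro i _ hi1 hi2
    exact Set.disjoint_left.1 hd hi1 hi2
  rw [← Finset.card_union_of_disjoint hdisj]
  apply Finset.card_le_card
  intro i hi
  rcases Finset.mem_union.1 hi with hi | hi <;>
    rw [Finset.mem_filter] at hi ⊢
  · exact ⟨hi.1, h1 hi.2⟩
  · exact ⟨hi.1, h2 hi.2⟩

lemma vis_univ (T : X → X) (x₀ : X) (n : ℕ) : vis T x₀ univ n = n := by
  simp [vis]

lemma iterate_mem_preimage (T : X → X) (x₀ : X) (S : Set X) (i : ℕ) :
    T^[i] x₀ ∈ T ⁻¹' S ↔ T^[i+1] x₀ ∈ S := by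
  rw [Set.mem_preimage, ← Function.iterate_succ_apply' T i x₀]

lemma vis_preimage_le (T : X → X) (x₀ : X) (S : Set X) (n : ℕ) :
    vis T x₀ (T ⁻¹' S) n ≤ vis T x₀ S n + 1 := by
  have h1 : vis T x₀ (T ⁻¹' S) n ≤ vis T x₀ S (n+1) := by
    apply Finset.card_le_card_of_injOn (fun i => i + 1)
    · intro i hi
      simp only [Finset.mem_coe, Finset.mem_filter, Finset.mem_range] at hi ⊢
      exact ⟨by omega, (iterate_mem_preimage T x₀ S i).1 hi.2⟩
    · intro a _ b _ hab
      have : a + 1 = b + 1 := hab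
      omega
  have h2 : vis T x₀ S (n+1) ≤ vis T x₀ S n + 1 := by
    unfold vis
    rw [Finset.range_add_one, Finset.filter_insert]
    split_ifs
    · exact Finset.card_insert_le _ _
    · omega
  omega

lemma le_vis_preimage (T : X → X) (x₀ : X) (S : Set X) (n : ℕ) :
    vis T x₀ S n ≤ vis T x₀ (T ⁻¹' S) n + 1 := by
  have step : vis T x₀ S n ≤
      (((Finset.range n).filter (fun i => T^[i] x₀ ∈ S)).erase 0).card + 1 := by
    have := Finset.card_erase_add_one (a := 0)
      (s := (Finset.range n).filter (fun i => T^[i] x₀ ∈ S))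
    by_cases h0 : 0 ∈ (Finset.range n).filter (fun i => T^[i] x₀ ∈ S)
    · have := this h0; unfold vis; omega
    · rw [Finset.erase_eq_of_notMem h0]; unfold vis; omega
  have h2 : (((Finset.range n).filter (fun i => T^[i] x₀ ∈ S)).erase 0).card ≤
      vis T x₀ (T ⁻¹' S) n := by
    apply Finset.card_le_card_of_injOn (fun j => j - 1)
    · intro j hj
      rw [Finset.mem_coe, Finset.mem_erase, Finset.mem_filter, Finset.mem_range] at hj
      obtain ⟨hj0, hjn, hjS⟩ := hj
      simp only [Finset.mem_coe, Finset.mem_filter, Finset.mem_range]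
      refine ⟨by omega, ?_⟩
      rw [iterate_mem_preimage]
      have : j - 1 + 1 = j := by omega
      rw [this]; exact hjS
    · intro a ha b hb hab
      rw [Finset.mem_coe, Finset.mem_erase] at ha hb
      have : a - 1 = b - 1 := hab
      omega
  omega

lemma cnt_nonneg (T : X → X) (x₀ : X) (S : Set X) (n : ℕ) : 0 ≤ cnt T x₀ S n := by
  unfold cnt; positivity

lemma cnt_le_one (T : X → X) (x₀ : X) (S : Set X) (n : ℕ) : cnt T x₀ S n ≤ 1 := by
  unfold cnt
  rcases Nat.eq_zero_or_pos n with h | h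
  · simp [h]
  · rw [div_le_one (by exact_mod_cast h)]
    exact_mod_cast vis_le T x₀ S n

lemma cnt_mem_Icc (T : X → X) (x₀ : X) (S : Set X) (n : ℕ) :
    cnt T x₀ S n ∈ Set.Icc (0:ℝ) 1 :=
  ⟨cnt_nonneg T x₀ S n, cnt_le_one T x₀ S n⟩

lemma cnt_mono (T : X → X) (x₀ : X) {S S' : Set X} (h : S ⊆ S') (n : ℕ) :
    cnt T x₀ S n ≤ cnt T x₀ S' n := by
  unfold cnt
  rcases Nat.eq_zero_or_pos n with hn | hn
  · simp [hn]
  · rw [div_le_div_iff_of_pos_right (by exact_mod_cast hn)]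
    exact_mod_cast vis_mono T x₀ h n

lemma cnt_union_le (T : X → X) (x₀ : X) (S S' : Set X) (n : ℕ) :
    cnt T x₀ (S ∪ S') n ≤ cnt T x₀ S n + cnt T x₀ S' n := by
  unfold cnt
  rw [← add_div]
  rcases Nat.eq_zero_or_pos n with hn | hn
  · simp [hn]
  · rw [div_le_div_iff_of_pos_right (by exact_mod_cast hn)]
    exact_mod_cast vis_union_le T x₀ S S' n

lemma cnt_add_le_of_disjoint (T : X → X) (x₀ : X) {S₁ S₂ S : Set X}
    (hd : Disjoint S₁ S₂) (h1 : S₁ ⊆ S) (h2 : S₂ ⊆ S) (n : ℕ) :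
    cnt T x₀ S₁ n + cnt T x₀ S₂ n ≤ cnt T x₀ S n := by
  unfold cnt
  rw [← add_div]
  rcases Nat.eq_zero_or_pos n with hn | hn
  · simp [hn]
  · rw [div_le_div_iff_of_pos_right (by exact_mod_cast hn)]
    exact_mod_cast vis_add_le_of_disjoint T x₀ hd h1 h2 n

lemma cnt_univ (T : X → X) (x₀ : X) {n : ℕ} (hn : 1 ≤ n) : cnt T x₀ univ n = 1 := by
  unfold cnt
  rw [vis_univ]
  field_simp

lemma abs_cnt_preimage_sub_le (T : X → X) (x₀ : X) (S : Set X) (n : ℕ) :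
    |cnt T x₀ (T ⁻¹' S) n - cnt T x₀ S n| ≤ 1 / n := by
  rcases Nat.eq_zero_or_pos n with hn | hn
  · simp [hn, cnt]
  unfold cnt
  rw [div_sub_div_same, abs_div, abs_of_nonneg (by positivity : (0:ℝ) ≤ (n:ℝ))]
  rw [div_le_div_iff_of_pos_right (by exact_mod_cast hn)]
  have h1 := vis_preimage_le T x₀ S n
  have h2 := le_vis_preimage T x₀ S n
  rw [abs_le]
  constructor
  · have : (vis T x₀ S n : ℝ) ≤ (vis T x₀ (T ⁻¹' S) n : ℝ) + 1 := by exact_mod_cast h2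
    linarith
  · have : (vis T x₀ (T ⁻¹' S) n : ℝ) ≤ (vis T x₀ S n : ℝ) + 1 := by exact_mod_cast h1
    linarith


/-- a fixed ultrafilter extending `atTop` on ℕ -/
noncomputable def U : Ultrafilter ℕ := Ultrafilter.of atTop

lemma U_le_atTop : (U : Filter ℕ) ≤ atTop := Ultrafilter.of_le _

/-- generalized (ultrafilter) limit of the visit frequencies -/
noncomputable def Ell (T : X → X) (x₀ : X) (S : Set X) : ℝ :=
  limUnder (U : Filter ℕ) (cnt T x₀ S)

lemma tendsto_Ell (T : X → X) (x₀ : X) (S : Set X) :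
    Tendsto (cnt T x₀ S) (U : Filter ℕ) (𝓝 (Ell T x₀ S)) := by
  have hmem : Set.Icc (0:ℝ) 1 ∈ (U : Filter ℕ).map (cnt T x₀ S) := by
    apply Filter.mem_map.2
    exact Filter.univ_mem' (fun n => cnt_mem_Icc T x₀ S n)
  obtain ⟨c, -, hc⟩ := isCompact_Icc.ultrafilter_le_nhds
    ((U.map (cnt T x₀ S))) (by rwa [Ultrafilter.coe_map, Filter.le_principal_iff])
  exact le_nhds_lim ⟨c, hc⟩

lemma Ell_unique {T : X → X} {x₀ : X} {S : Set X} {c : ℝ}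
    (hc : Tendsto (cnt T x₀ S) (U : Filter ℕ) (𝓝 c)) : Ell T x₀ S = c :=
  tendsto_nhds_unique (tendsto_Ell T x₀ S) hc

lemma Ell_nonneg (T : X → X) (x₀ : X) (S : Set X) : 0 ≤ Ell T x₀ S :=
  le_of_tendsto_of_tendsto tendsto_const_nhds (tendsto_Ell T x₀ S)
    (Filter.Eventually.of_forall (fun n => cnt_nonneg T x₀ S n))

lemma Ell_le_one (T : X → X) (x₀ : X) (S : Set X) : Ell T x₀ S ≤ 1 :=
  le_of_tendsto_of_tendsto (tendsto_Ell T x₀ S) tendsto_const_nhds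
    (Filter.Eventually.of_forall (fun n => cnt_le_one T x₀ S n))

lemma Ell_mono (T : X → X) (x₀ : X) {S S' : Set X} (h : S ⊆ S') :
    Ell T x₀ S ≤ Ell T x₀ S' :=
  le_of_tendsto_of_tendsto (tendsto_Ell T x₀ S) (tendsto_Ell T x₀ S')
    (Filter.Eventually.of_forall (fun n => cnt_mono T x₀ h n))

lemma Ell_union_le (T : X → X) (x₀ : X) (S S' : Set X) :
    Ell T x₀ (S ∪ S') ≤ Ell T x₀ S + Ell T x₀ S' :=
  le_of_tendsto_of_tendsto (tendsto_Ell T x₀ (S ∪ S'))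
    ((tendsto_Ell T x₀ S).add (tendsto_Ell T x₀ S'))
    (Filter.Eventually.of_forall (fun n => cnt_union_le T x₀ S S' n))

lemma Ell_add_le_of_disjoint (T : X → X) (x₀ : X) {S₁ S₂ S : Set X}
    (hd : Disjoint S₁ S₂) (h1 : S₁ ⊆ S) (h2 : S₂ ⊆ S) :
    Ell T x₀ S₁ + Ell T x₀ S₂ ≤ Ell T x₀ S :=
  le_of_tendsto_of_tendsto ((tendsto_Ell T x₀ S₁).add (tendsto_Ell T x₀ S₂))
    (tendsto_Ell T x₀ S)
    (Filter.Eventually.of_forall (fun n => cnt_add_le_of_disjoint T x₀ hd h1 h2 n))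

lemma Ell_univ (T : X → X) (x₀ : X) : Ell T x₀ univ = 1 := by
  apply Ell_unique
  have heq : (fun _ : ℕ => (1:ℝ)) =ᶠ[(U : Filter ℕ)] cnt T x₀ univ := by
    apply Filter.Eventually.filter_mono U_le_atTop
    filter_upwards [Filter.eventually_ge_atTop 1] with n hn
    exact (cnt_univ T x₀ hn).symm
  exact Tendsto.congr' heq tendsto_const_nhds

lemma Ell_preimage (T : X → X) (x₀ : X) (S : Set X) :
    Ell T x₀ (T ⁻¹' S) = Ell T x₀ S := by
  apply Ell_unique
  have hdiff : Tendsto (fun n => cnt T x₀ (T ⁻¹' S) n - cnt T x₀ S n)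
      (U : Filter ℕ) (𝓝 0) := by
    apply squeeze_zero_norm (fun n => abs_cnt_preimage_sub_le T x₀ S n)
    apply Tendsto.mono_left _ U_le_atTop
    simpa using tendsto_one_div_atTop_nhds_zero_nat (𝕜 := ℝ)
  have := hdiff.add (tendsto_Ell T x₀ S)
  simp only [zero_add] at this
  exact this.congr (fun n => by ring)


open TopologicalSpace

/-- outer regularization of `Ell` -/
noncomputable def mR (T : X → X) (x₀ : X) (S : Set X) : ℝ :=
  sInf {r : ℝ | ∃ U : Opens X, S ⊆ (U : Set X) ∧ r = Ell T x₀ (U : Set X)}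

lemma mR_set_nonempty (T : X → X) (x₀ : X) (S : Set X) :
    {r : ℝ | ∃ U : Opens X, S ⊆ (U : Set X) ∧ r = Ell T x₀ (U : Set X)}.Nonempty :=
  ⟨Ell T x₀ (univ : Set X), ⟨⊤, by simp⟩⟩

lemma mR_set_bddBelow (T : X → X) (x₀ : X) (S : Set X) :
    BddBelow {r : ℝ | ∃ U : Opens X, S ⊆ (U : Set X) ∧ r = Ell T x₀ (U : Set X)} :=
  ⟨0, fun r ⟨u, _, hr⟩ => hr ▸ Ell_nonneg T x₀ _⟩

lemma mR_le (T : X → X) (x₀ : X) {S : Set X} (V : Opens X) (h : S ⊆ (V : Set X)) :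
    mR T x₀ S ≤ Ell T x₀ (V : Set X) :=
  csInf_le (mR_set_bddBelow T x₀ S) ⟨V, h, rfl⟩

lemma mR_nonneg (T : X → X) (x₀ : X) (S : Set X) : 0 ≤ mR T x₀ S :=
  le_csInf (mR_set_nonempty T x₀ S) (fun r ⟨u, _, hr⟩ => hr ▸ Ell_nonneg T x₀ _)

lemma mR_le_one (T : X → X) (x₀ : X) (S : Set X) : mR T x₀ S ≤ 1 := by
  have := mR_le T x₀ (S := S) ⊤ (by simp)
  simpa [Ell_univ] using this

lemma mR_mono (T : X → X) (x₀ : X) {S S' : Set X} (h : S ⊆ S') :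
    mR T x₀ S ≤ mR T x₀ S' :=
  le_csInf (mR_set_nonempty T x₀ S') (fun r ⟨u, hu, hr⟩ =>
    hr ▸ mR_le T x₀ u (h.trans hu))

lemma exists_opens_lt (T : X → X) (x₀ : X) {S : Set X} {c : ℝ} (hc : mR T x₀ S < c) :
    ∃ V : Opens X, S ⊆ (V : Set X) ∧ Ell T x₀ (V : Set X) < c := by
  obtain ⟨r, ⟨V, hV, rfl⟩, hrc⟩ :=
    (csInf_lt_iff (mR_set_bddBelow T x₀ S) (mR_set_nonempty T x₀ S)).1 hc
  exact ⟨V, hV, hrc⟩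

lemma mR_union_le (T : X → X) (x₀ : X) (S S' : Set X) :
    mR T x₀ (S ∪ S') ≤ mR T x₀ S + mR T x₀ S' := by
  refine le_of_forall_pos_le_add (fun ε hε => ?_)
  obtain ⟨V, hV, hVlt⟩ := exists_opens_lt T x₀
    (lt_add_of_pos_right (mR T x₀ S) (half_pos hε))
  obtain ⟨W, hW, hWlt⟩ := exists_opens_lt T x₀
    (lt_add_of_pos_right (mR T x₀ S') (half_pos hε))
  have h1 : mR T x₀ (S ∪ S') ≤ Ell T x₀ ((V ⊔ W : Opens X) : Set X) :=
    mR_le T x₀ (V ⊔ W) (by rw [Opens.coe_sup]; exact union_subset_union hV hW)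
  have h2 : Ell T x₀ ((V ⊔ W : Opens X) : Set X) ≤
      Ell T x₀ (V : Set X) + Ell T x₀ (W : Set X) := by
    rw [Opens.coe_sup]; exact Ell_union_le T x₀ _ _
  linarith

lemma mR_add_le_of_disjoint_isCompact (T : X → X) (x₀ : X) {K₁ K₂ : Set X}
    (h1 : IsCompact K₁) (h2 : IsCompact K₂) (hd : Disjoint K₁ K₂) :
    mR T x₀ K₁ + mR T x₀ K₂ ≤ mR T x₀ (K₁ ∪ K₂) := by
  obtain ⟨V₁, V₂, hV₁, hV₂, hK₁, hK₂, hVd⟩ := SeparatedNhds.of_isCompact_isCompact h1 h2 hd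
  refine le_csInf (mR_set_nonempty T x₀ _) ?_
  rintro r ⟨W, hW, rfl⟩
  have e1 : mR T x₀ K₁ ≤ Ell T x₀ ((W ⊓ ⟨V₁, hV₁⟩ : Opens X) : Set X) :=
    mR_le T x₀ _ (subset_inter ((subset_union_left).trans hW) hK₁)
  have e2 : mR T x₀ K₂ ≤ Ell T x₀ ((W ⊓ ⟨V₂, hV₂⟩ : Opens X) : Set X) :=
    mR_le T x₀ _ (subset_inter ((subset_union_right).trans hW) hK₂)
  have e3 : Ell T x₀ ((W ⊓ ⟨V₁, hV₁⟩ : Opens X) : Set X)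
      + Ell T x₀ ((W ⊓ ⟨V₂, hV₂⟩ : Opens X) : Set X) ≤ Ell T x₀ (W : Set X) := by
    apply Ell_add_le_of_disjoint T x₀
    · exact (hVd.mono inter_subset_right inter_subset_right)
    · exact inter_subset_left
    · exact inter_subset_left
  linarith

lemma mR_univ (T : X → X) (x₀ : X) : mR T x₀ (univ : Set X) = 1 := by
  apply le_antisymm (mR_le_one T x₀ univ)
  refine le_csInf (mR_set_nonempty T x₀ _) ?_
  rintro r ⟨W, hW, rfl⟩
  have : (W : Set X) = univ := univ_subset_iff.1 hW
  rw [this, Ell_univ]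

/-- the pullback trick: shrink an open set around `T ⁻¹' A` to one of the form `T ⁻¹' W`. -/
lemma exists_open_sandwich (T : X → X) (hT : Continuous T) {A V : Set X}
    (hV : IsOpen V) (hAV : T ⁻¹' A ⊆ V) :
    ∃ W : Set X, IsOpen W ∧ A ⊆ W ∧ T ⁻¹' W ⊆ V := by
  refine ⟨(T '' Vᶜ)ᶜ, ?_, ?_, ?_⟩
  · rw [isOpen_compl_iff]
    exact ((hV.isClosed_compl.isCompact).image hT).isClosed
  · intro a ha
    simp only [mem_compl_iff, Set.mem_image, not_exists, not_and]
    intro w hw hwa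
    exact hw (hAV (by rw [Set.mem_preimage, hwa]; exact ha))
  · intro w hw
    by_contra hwV
    exact hw (Set.mem_image_of_mem T hwV)

lemma mR_preimage (T : X → X) (hT : Continuous T) (x₀ : X) (S : Set X) :
    mR T x₀ (T ⁻¹' S) = mR T x₀ S := by
  apply le_antisymm
  · refine le_of_forall_pos_le_add (fun ε hε => ?_)
    obtain ⟨V, hV, hVlt⟩ := exists_opens_lt T x₀ (lt_add_of_pos_right (mR T x₀ S) hε)
    have := mR_le T x₀ (S := T ⁻¹' S) ⟨T ⁻¹' V, V.isOpen.preimage hT⟩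
      (preimage_mono hV)
    rw [Opens.coe_mk, Ell_preimage] at this
    linarith
  · refine le_of_forall_pos_le_add (fun ε hε => ?_)
    obtain ⟨V, hV, hVlt⟩ := exists_opens_lt T x₀
      (lt_add_of_pos_right (mR T x₀ (T ⁻¹' S)) hε)
    obtain ⟨W, hWopen, hSW, hWV⟩ := exists_open_sandwich T hT V.isOpen hV
    have h1 : mR T x₀ S ≤ Ell T x₀ W := mR_le T x₀ ⟨W, hWopen⟩ hSW
    have h2 : Ell T x₀ W = Ell T x₀ (T ⁻¹' W) := (Ell_preimage T x₀ W).symm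
    have h3 : Ell T x₀ (T ⁻¹' W) ≤ Ell T x₀ (V : Set X) := Ell_mono T x₀ hWV
    linarith

/-- The content of visit frequencies. -/
noncomputable def fkContent (T : X → X) (x₀ : X) : Content X where
  toFun K := Real.toNNReal (mR T x₀ (K : Set X))
  mono' K₁ K₂ h := Real.toNNReal_mono (mR_mono T x₀ h)
  sup_disjoint' K₁ K₂ hd _ _ := by
    have : mR T x₀ ((K₁ ⊔ K₂ : Compacts X) : Set X)
        = mR T x₀ (K₁ : Set X) + mR T x₀ (K₂ : Set X) := by
      rw [Compacts.coe_sup]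
      exact le_antisymm (mR_union_le T x₀ _ _)
        (mR_add_le_of_disjoint_isCompact T x₀ K₁.isCompact K₂.isCompact hd)
    rw [this, Real.toNNReal_add (mR_nonneg T x₀ _) (mR_nonneg T x₀ _)]
  sup_le' K₁ K₂ := by
    have : mR T x₀ ((K₁ ⊔ K₂ : Compacts X) : Set X)
        ≤ mR T x₀ (K₁ : Set X) + mR T x₀ (K₂ : Set X) := by
      rw [Compacts.coe_sup]; exact mR_union_le T x₀ _ _
    show Real.toNNReal (mR T x₀ ((K₁ ⊔ K₂ : Compacts X) : Set X)) ≤ _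
    calc Real.toNNReal (mR T x₀ ((K₁ ⊔ K₂ : Compacts X) : Set X))
        ≤ Real.toNNReal (mR T x₀ (K₁ : Set X) + mR T x₀ (K₂ : Set X)) :=
          Real.toNNReal_mono this
      _ = _ := Real.toNNReal_add (mR_nonneg T x₀ _) (mR_nonneg T x₀ _)

lemma fkContent_apply (T : X → X) (x₀ : X) (K : Compacts X) :
    (fkContent T x₀) K = ENNReal.ofReal (mR T x₀ (K : Set X)) := rfl

lemma fkContent_le_one (T : X → X) (x₀ : X) (K : Compacts X) :
    (fkContent T x₀) K ≤ 1 := by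
  rw [fkContent_apply]
  exact ENNReal.ofReal_le_one.2 (mR_le_one T x₀ _)

lemma fkContent_preimage (T : X → X) (hT : Continuous T) (x₀ : X)
    (K K' : Compacts X) (h : (K' : Set X) = T ⁻¹' (K : Set X)) :
    (fkContent T x₀) K' = (fkContent T x₀) K := by
  rw [fkContent_apply, fkContent_apply, h, mR_preimage T hT x₀]


lemma preimage_compacts (T : X → X) (hT : Continuous T) (K : Compacts X) :
    IsCompact (T ⁻¹' (K : Set X)) :=
  (K.isCompact.isClosed.preimage hT).isCompact

lemma fk_outerMeasure_preimage_open (T : X → X) (hT : Continuous T) (x₀ : X)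
    {V : Set X} (hV : IsOpen V) :
    (fkContent T x₀).outerMeasure (T ⁻¹' V) = (fkContent T x₀).outerMeasure V := by
  set c := fkContent T x₀ with hc
  rw [c.outerMeasure_of_isOpen _ (hV.preimage hT), c.outerMeasure_of_isOpen _ hV]
  apply le_antisymm
  · simp only [Content.innerContent]
    apply iSup₂_le
    intro K' hK'
    calc c K' ≤ c ⟨T ⁻¹' (T '' (K' : Set X)),
            preimage_compacts T hT ⟨T '' (K' : Set X), K'.isCompact.image hT⟩⟩ :=
          c.mono _ _ (Set.subset_preimage_image T (K' : Set X))
      _ = c ⟨T '' (K' : Set X), K'.isCompact.image hT⟩ :=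
          fkContent_preimage T hT x₀ ⟨T '' (K' : Set X), K'.isCompact.image hT⟩ _ rfl
      _ ≤ c.innerContent ⟨V, hV⟩ := by
          apply c.le_innerContent
          show T '' (K' : Set X) ⊆ V
          exact Set.image_subset_iff.2 hK'
  · simp only [Content.innerContent]
    apply iSup₂_le
    intro K hK
    calc c K = c ⟨T ⁻¹' (K : Set X), preimage_compacts T hT K⟩ :=
          (fkContent_preimage T hT x₀ K _ rfl).symm
      _ ≤ c.innerContent ⟨T ⁻¹' V, hV.preimage hT⟩ := by
          apply c.le_innerContent
          show T ⁻¹' (K : Set X) ⊆ T ⁻¹' V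
          exact Set.preimage_mono hK

lemma fk_outerMeasure_preimage (T : X → X) (hT : Continuous T) (x₀ : X) (A : Set X) :
    (fkContent T x₀).outerMeasure (T ⁻¹' A) = (fkContent T x₀).outerMeasure A := by
  set c := fkContent T x₀ with hc
  apply le_antisymm
  · rw [c.outerMeasure_eq_iInf A]
    refine le_iInf (fun V => le_iInf (fun hV => le_iInf (fun hAV => ?_)))
    calc c.outerMeasure (T ⁻¹' A) ≤ c.outerMeasure (T ⁻¹' V) :=
          c.outerMeasure.mono (Set.preimage_mono hAV)
      _ = c.outerMeasure V := fk_outerMeasure_preimage_open T hT x₀ hV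
      _ = c.innerContent ⟨V, hV⟩ := c.outerMeasure_of_isOpen V hV
  · rw [c.outerMeasure_eq_iInf (T ⁻¹' A)]
    refine le_iInf (fun V => le_iInf (fun hV => le_iInf (fun hAV => ?_)))
    obtain ⟨W, hWopen, hAW, hWV⟩ := exists_open_sandwich T hT hV hAV
    calc c.outerMeasure A ≤ c.outerMeasure W := c.outerMeasure.mono hAW
      _ = c.outerMeasure (T ⁻¹' W) := (fk_outerMeasure_preimage_open T hT x₀ hWopen).symm
      _ ≤ c.outerMeasure V := c.outerMeasure.mono hWV
      _ = c.innerContent ⟨V, hV⟩ := c.outerMeasure_of_isOpen V hV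

lemma fk_measure_univ [MeasurableSpace X] [BorelSpace X] (T : X → X) (x₀ : X) :
    (fkContent T x₀).measure univ = 1 := by
  set c := fkContent T x₀ with hc
  rw [c.measure_apply MeasurableSet.univ, c.outerMeasure_of_isOpen _ isOpen_univ]
  apply le_antisymm
  · simp only [Content.innerContent]
    apply iSup₂_le
    intro K _
    exact fkContent_le_one T x₀ K
  · have h1 : c ⟨univ, isCompact_univ⟩ = 1 := by
      rw [fkContent_apply, Compacts.coe_mk, mR_univ, ENNReal.ofReal_one]
    calc (1 : ℝ≥0∞) = c ⟨univ, isCompact_univ⟩ := h1.symm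
      _ ≤ c.innerContent ⟨univ, isOpen_univ⟩ :=
          c.le_innerContent ⟨univ, isCompact_univ⟩ ⟨univ, isOpen_univ⟩ subset_rfl

/-- Krylov–Bogolyubov: existence of an invariant Borel probability measure. -/
lemma exists_invariant_probabilityMeasure [MeasurableSpace X] [BorelSpace X]
    (T : X → X) (hT : Continuous T) :
    ∃ μ : Measure X, IsProbabilityMeasure μ ∧
      ∀ A : Set X, MeasurableSet A → μ (T ⁻¹' A) = μ A := by
  have x₀ : X := Classical.arbitrary X
  set c := fkContent T x₀ with hc
  refine ⟨c.measure, ⟨fk_measure_univ T x₀⟩, fun A hA => ?_⟩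
  rw [c.measure_apply (hA.preimage hT.measurable), c.measure_apply hA]
  exact fk_outerMeasure_preimage T hT x₀ A


section Unique

lemma strictMono_fin_le {k : ℕ} {i : Fin k → ℕ} (hi : StrictMono i) :
    ∀ t : ℕ, ∀ ht : t < k, t ≤ i ⟨t, ht⟩ := by
  intro t
  induction t with
  | zero => intro ht; exact Nat.zero_le _
  | succ t ih =>
      intro ht
      have h1 : t < k := lt_trans (Nat.lt_succ_self t) ht
      have h2 : i ⟨t, h1⟩ < i ⟨t+1, ht⟩ := hi (by simp [Fin.mk_lt_mk])
      have h3 := ih h1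
      omega

lemma zero_mem_matchSet (T : X → X) (δ : ℝ) (n : ℕ) (x z : X) :
    0 ∈ {k : ℕ | ∃ i j : Fin k → ℕ, StrictMono i ∧ StrictMono j ∧
      (∀ s, i s < n) ∧ (∀ s, j s < n) ∧ ∀ s, dist (T^[i s] x) (T^[j s] z) < δ} :=
  ⟨Fin.elim0, Fin.elim0, fun a => a.elim0, fun a => a.elim0,
    fun s => s.elim0, fun s => s.elim0, fun s => s.elim0⟩

lemma matchSet_le (T : X → X) (δ : ℝ) (n : ℕ) (x z : X) :
    ∀ k ∈ {k : ℕ | ∃ i j : Fin k → ℕ, StrictMono i ∧ StrictMono j ∧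
      (∀ s, i s < n) ∧ (∀ s, j s < n) ∧ ∀ s, dist (T^[i s] x) (T^[j s] z) < δ}, k ≤ n := by
  rintro k ⟨i, j, hi, hj, hin, hjn, hd⟩
  rcases k with - | m
  · exact Nat.zero_le n
  · have h1 := strictMono_fin_le hi m (Nat.lt_succ_self m)
    have h2 := hin ⟨m, Nat.lt_succ_self m⟩
    omega

lemma maxFit_le (T : X → X) (δ : ℝ) (n : ℕ) (x z : X) : maxFit T δ n x z ≤ n :=
  csSup_le ⟨0, zero_mem_matchSet T δ n x z⟩ (matchSet_le T δ n x z)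

lemma maxFit_mem (T : X → X) (δ : ℝ) (n : ℕ) (x z : X) :
    maxFit T δ n x z ∈ {k : ℕ | ∃ i j : Fin k → ℕ, StrictMono i ∧ StrictMono j ∧
      (∀ s, i s < n) ∧ (∀ s, j s < n) ∧ ∀ s, dist (T^[i s] x) (T^[j s] z) < δ} :=
  Nat.sSup_mem ⟨0, zero_mem_matchSet T δ n x z⟩ ⟨n, matchSet_le T δ n x z⟩

lemma le_maxFit (T : X → X) (δ : ℝ) (n : ℕ) (x z : X) {k : ℕ}
    (hk : k ∈ {k : ℕ | ∃ i j : Fin k → ℕ, StrictMono i ∧ StrictMono j ∧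
      (∀ s, i s < n) ∧ (∀ s, j s < n) ∧ ∀ s, dist (T^[i s] x) (T^[j s] z) < δ}) :
    k ≤ maxFit T δ n x z :=
  le_csSup ⟨n, matchSet_le T δ n x z⟩ hk

lemma fbarN_nonneg (T : X → X) (δ : ℝ) (n : ℕ) (x z : X) : 0 ≤ fbarN T δ n x z := by
  unfold fbarN
  rcases Nat.eq_zero_or_pos n with hn | hn
  · simp [hn]
  · have h := maxFit_le T δ n x z
    have h2 : (maxFit T δ n x z : ℝ) / n ≤ 1 := by
      rw [div_le_one (by exact_mod_cast hn)]
      exact_mod_cast h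
    linarith

lemma fbarN_le_one (T : X → X) (δ : ℝ) (n : ℕ) (x z : X) : fbarN T δ n x z ≤ 1 := by
  unfold fbarN
  have : (0:ℝ) ≤ (maxFit T δ n x z : ℝ) / n := by positivity
  linarith

lemma rho_set_nonempty (T : X → X) (x z : X) :
    ∃ δ : ℝ, 0 < δ ∧ fbar T δ x z < δ := by
  set δ := Metric.diam (univ : Set X) + 1 with hδ
  have hδpos : 0 < δ := by
    have := Metric.diam_nonneg (s := (univ : Set X))
    linarith
  refine ⟨δ, hδpos, ?_⟩
  have hfull : ∀ n : ℕ, n ∈ {k : ℕ | ∃ i j : Fin k → ℕ, StrictMono i ∧ StrictMono j ∧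
      (∀ s, i s < n) ∧ (∀ s, j s < n) ∧ ∀ s, dist (T^[i s] x) (T^[j s] z) < δ} := by
    intro n
    refine ⟨Fin.val, Fin.val, fun a b hab => hab, fun a b hab => hab,
      fun s => s.isLt, fun s => s.isLt, fun s => ?_⟩
    have := Metric.dist_le_diam_of_mem (isCompact_univ.isBounded)
      (Set.mem_univ (T^[(s : ℕ)] x)) (Set.mem_univ (T^[(s : ℕ)] z))
    linarith
  have hev : ∀ n : ℕ, 1 ≤ n → fbarN T δ n x z ≤ 0 := by
    intro n hn
    have h1 : n ≤ maxFit T δ n x z := le_maxFit T δ n x z (hfull n)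
    have h2 : maxFit T δ n x z = n := le_antisymm (maxFit_le T δ n x z) h1
    unfold fbarN
    rw [h2]
    have : (n:ℝ) / n = 1 := by
      field_simp
    rw [this]
    norm_num
  have hbdd : Filter.IsBoundedUnder (· ≥ ·) atTop (fun n => fbarN T δ n x z) :=
    Filter.isBoundedUnder_of ⟨0, fun n => fbarN_nonneg T δ n x z⟩
  have : fbar T δ x z ≤ 0 := by
    apply Filter.limsup_le_of_le hbdd.isCoboundedUnder_flip
    filter_upwards [Filter.eventually_ge_atTop 1] with n hn
    exact hev n hn
  linarith

lemma exists_small_match {T : X → X} {x z : X} (h : rhoFK T x z = 0) {η : ℝ} (hη : 0 < η) :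
    ∃ δ : ℝ, 0 < δ ∧ δ < η ∧ fbar T δ x z < δ := by
  by_contra hc
  push_neg at hc
  have hge : η ≤ rhoFK T x z := by
    apply le_csInf
    · obtain ⟨δ, h1, h2⟩ := rho_set_nonempty T x z
      exact ⟨δ, h1, h2⟩
    · rintro δ ⟨h1, h2⟩
      by_contra hlt
      push_neg at hlt
      exact absurd h2 (not_lt.2 (hc δ h1 hlt))
  rw [h] at hge
  linarith


/-- Birkhoff average -/
noncomputable def birk (T : X → X) (f : X → ℝ) (n : ℕ) (x : X) : ℝ :=
  (∑ i ∈ Finset.range n, f (T^[i] x)) / n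

lemma abs_sum_le (f : X →ᵇ ℝ) (T : X → X) (x : X) (s : Finset ℕ) :
    |∑ t ∈ s, f (T^[t] x)| ≤ (s.card : ℝ) * ‖f‖ := by
  calc |∑ t ∈ s, f (T^[t] x)| ≤ ∑ t ∈ s, |f (T^[t] x)| := Finset.abs_sum_le_sum_abs _ _
    _ ≤ ∑ _t ∈ s, ‖f‖ := by
        apply Finset.sum_le_sum
        intro t _
        exact f.norm_coe_le_norm (T^[t] x)
    _ = (s.card : ℝ) * ‖f‖ := by rw [Finset.sum_const, nsmul_eq_mul]

lemma abs_birk_le (f : X →ᵇ ℝ) (T : X → X) (n : ℕ) (x : X) :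
    |birk T (⇑f) n x| ≤ ‖f‖ := by
  unfold birk
  rcases Nat.eq_zero_or_pos n with hn | hn
  · simp [hn, norm_nonneg]
  · rw [abs_div, abs_of_nonneg (by positivity : (0:ℝ) ≤ (n:ℝ)),
      div_le_iff₀ (by exact_mod_cast hn)]
    calc |∑ t ∈ Finset.range n, f (T^[t] x)| ≤ ((Finset.range n).card : ℝ) * ‖f‖ :=
          abs_sum_le f T x _
      _ = ‖f‖ * n := by rw [Finset.card_range]; ring

lemma sum_sub_subsum_bound (f : X →ᵇ ℝ) (T : X → X) (x : X) {n k : ℕ} (hk : k ≤ n)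
    {i : Fin k → ℕ} (hi : StrictMono i) (hin : ∀ s, i s < n) :
    |∑ t ∈ Finset.range n, f (T^[t] x) - ∑ s : Fin k, f (T^[i s] x)|
      ≤ ((n : ℝ) - k) * ‖f‖ := by
  set A : Finset ℕ := Finset.image i Finset.univ with hA
  have hsub : A ⊆ Finset.range n := by
    intro t ht
    rw [hA, Finset.mem_image] at ht
    obtain ⟨s, _, rfl⟩ := ht
    exact Finset.mem_range.2 (hin s)
  have hcard : A.card = k := by
    rw [hA, Finset.card_image_of_injective _ hi.injective, Finset.card_univ,
      Fintype.card_fin]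
  have h1 : ∑ t ∈ A, f (T^[t] x) = ∑ s : Fin k, f (T^[i s] x) := by
    rw [hA]
    exact Finset.sum_image (fun a _ b _ hab => hi.injective hab)
  have h2 : ∑ t ∈ Finset.range n \ A, f (T^[t] x) + ∑ t ∈ A, f (T^[t] x)
      = ∑ t ∈ Finset.range n, f (T^[t] x) := Finset.sum_sdiff hsub
  have h3 : ∑ t ∈ Finset.range n, f (T^[t] x) - ∑ s : Fin k, f (T^[i s] x)
      = ∑ t ∈ Finset.range n \ A, f (T^[t] x) := by
    rw [← h1, ← h2]; ring
  rw [h3]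
  have h4 : ((Finset.range n \ A).card : ℝ) = (n : ℝ) - k := by
    rw [Finset.card_sdiff_of_subset hsub, Finset.card_range, hcard, Nat.cast_sub hk]
  calc |∑ t ∈ Finset.range n \ A, f (T^[t] x)|
      ≤ ((Finset.range n \ A).card : ℝ) * ‖f‖ := abs_sum_le f T x _
    _ = ((n : ℝ) - k) * ‖f‖ := by rw [h4]

lemma birk_diff_tendsto {T : X → X} (f : X →ᵇ ℝ) {x z : X} (hxz : rhoFK T x z = 0) :
    Tendsto (fun n => birk T (⇑f) n x - birk T (⇑f) n z) atTop (𝓝 0) := by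
  rw [NormedAddCommGroup.tendsto_nhds_zero]
  intro ε hε
  set C := ‖f‖ with hC
  have hC0 : 0 ≤ C := norm_nonneg f
  set ε' : ℝ := ε / 4 with hε'
  have hε'pos : 0 < ε' := by positivity
  -- uniform continuity modulus
  obtain ⟨δ₀, hδ₀pos, hδ₀⟩ := Metric.uniformContinuous_iff.1
    (CompactSpace.uniformContinuous_of_continuous f.continuous) ε' hε'pos
  set η : ℝ := min δ₀ (ε' / (C + 1)) with hη
  have hηpos : 0 < η := lt_min hδ₀pos (by positivity)
  obtain ⟨δ, hδpos, hδη, hfb⟩ := exists_small_match hxz hηpos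
  -- eventually fbarN < δ
  have hbdd : Filter.IsBoundedUnder (· ≤ ·) atTop (fun n => fbarN T δ n x z) :=
    Filter.isBoundedUnder_of ⟨1, fun n => fbarN_le_one T δ n x z⟩
  have hev : ∀ᶠ n in atTop, fbarN T δ n x z < δ :=
    Filter.eventually_lt_of_limsup_lt hfb hbdd
  filter_upwards [hev, Filter.eventually_ge_atTop 1] with n hn h1n
  have hnpos : (0:ℝ) < n := by exact_mod_cast h1n
  -- extract a good match
  have hmem := maxFit_mem T δ n x z
  have hkn' := maxFit_le T δ n x z
  unfold fbarN at hn
  obtain ⟨k, hksup⟩ : ∃ k, maxFit T δ n x z = k := ⟨_, rfl⟩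
  rw [hksup] at hmem hkn' hn
  obtain ⟨i, j, hi, hj, hin, hjn, hd⟩ := hmem
  have hkn : k ≤ n := hkn'
  have hkbig : (1 - δ) * n < (k : ℝ) := by
    have h2 : 1 - δ < (k : ℝ) / n := by linarith
    calc (1 - δ) * n < ((k : ℝ) / n) * n := by
          apply mul_lt_mul_of_pos_right h2 hnpos
      _ = (k : ℝ) := by field_simp
  -- the matched terms are close
  have hmatch : ∀ s : Fin k, |f (T^[i s] x) - f (T^[j s] z)| ≤ ε' := by
    intro s
    have hdist : dist (T^[i s] x) (T^[j s] z) < δ₀ :=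
      lt_of_lt_of_le (hd s) (le_trans hδη.le (min_le_left _ _))
    have := hδ₀ hdist
    rw [Real.dist_eq] at this
    exact this.le
  have hmid : |∑ s : Fin k, f (T^[i s] x) - ∑ s : Fin k, f (T^[j s] z)| ≤ (k : ℝ) * ε' := by
    calc |∑ s : Fin k, f (T^[i s] x) - ∑ s : Fin k, f (T^[j s] z)|
        = |∑ s : Fin k, (f (T^[i s] x) - f (T^[j s] z))| := by rw [Finset.sum_sub_distrib]
      _ ≤ ∑ s : Fin k, |f (T^[i s] x) - f (T^[j s] z)| := Finset.abs_sum_le_sum_abs _ _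
      _ ≤ ∑ _s : Fin k, ε' := Finset.sum_le_sum (fun s _ => hmatch s)
      _ = (k : ℝ) * ε' := by rw [Finset.sum_const, nsmul_eq_mul, Finset.card_univ,
            Fintype.card_fin]
  have hx1 := sum_sub_subsum_bound f T x hkn hi hin
  have hz1 := sum_sub_subsum_bound f T z hkn hj hjn
  have htot : |∑ t ∈ Finset.range n, f (T^[t] x) - ∑ t ∈ Finset.range n, f (T^[t] z)|
      ≤ 2 * ((n : ℝ) - k) * C + (k : ℝ) * ε' := by
    have := abs_sub_le
      (∑ t ∈ Finset.range n, f (T^[t] x)) (∑ s : Fin k, f (T^[i s] x))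
      (∑ t ∈ Finset.range n, f (T^[t] z))
    calc |∑ t ∈ Finset.range n, f (T^[t] x) - ∑ t ∈ Finset.range n, f (T^[t] z)|
        ≤ |∑ t ∈ Finset.range n, f (T^[t] x) - ∑ s : Fin k, f (T^[i s] x)|
          + |∑ s : Fin k, f (T^[i s] x) - ∑ t ∈ Finset.range n, f (T^[t] z)| := this
      _ ≤ |∑ t ∈ Finset.range n, f (T^[t] x) - ∑ s : Fin k, f (T^[i s] x)|
          + (|∑ s : Fin k, f (T^[i s] x) - ∑ s : Fin k, f (T^[j s] z)|
             + |∑ s : Fin k, f (T^[j s] z) - ∑ t ∈ Finset.range n, f (T^[t] z)|) := by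
          have := abs_sub_le (∑ s : Fin k, f (T^[i s] x)) (∑ s : Fin k, f (T^[j s] z))
            (∑ t ∈ Finset.range n, f (T^[t] z))
          linarith
      _ ≤ ((n : ℝ) - k) * C + ((k : ℝ) * ε' + ((n : ℝ) - k) * C) := by
          have hz1' : |∑ s : Fin k, f (T^[j s] z) - ∑ t ∈ Finset.range n, f (T^[t] z)|
              ≤ ((n : ℝ) - k) * C := by
            rw [abs_sub_comm]; exact hz1
          linarith [hx1, hmid, hz1']
      _ = 2 * ((n : ℝ) - k) * C + (k : ℝ) * ε' := by ring
  -- divide by n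
  have hbd : |birk T (⇑f) n x - birk T (⇑f) n z|
      ≤ (2 * ((n : ℝ) - k) * C + (k : ℝ) * ε') / n := by
    unfold birk
    rw [div_sub_div_same, abs_div, abs_of_nonneg hnpos.le]
    exact (div_le_div_iff_of_pos_right hnpos).2 htot
  have hnk : (n : ℝ) - k ≤ δ * n := by nlinarith
  have hδC : δ * C ≤ ε' := by
    have hδle : δ ≤ ε' / (C + 1) := le_trans hδη.le (min_le_right _ _)
    have : δ * (C + 1) ≤ ε' := by
      rw [← le_div_iff₀ (by positivity : (0:ℝ) < C + 1)]
      exact hδle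
    nlinarith
  have hfinal : (2 * ((n : ℝ) - k) * C + (k : ℝ) * ε') / n ≤ 3 * ε' := by
    rw [div_le_iff₀ hnpos]
    have h5 : (k : ℝ) ≤ n := by exact_mod_cast hkn
    nlinarith
  rw [Real.norm_eq_abs]
  calc |birk T (⇑f) n x - birk T (⇑f) n z| ≤ 3 * ε' := le_trans hbd hfinal
    _ < ε := by rw [hε']; linarith


lemma birk_continuous {T : X → X} (hT : Continuous T) (f : X →ᵇ ℝ) (n : ℕ) :
    Continuous (fun x => birk T (⇑f) n x) := by
  unfold birk
  apply Continuous.div_const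
  exact continuous_finset_sum _ (fun i _ => f.continuous.comp (hT.iterate i))

section Integration

variable [MeasurableSpace X] [BorelSpace X]

lemma map_eq {T : X → X} (hT : Continuous T) {μ : Measure X}
    (hinv : ∀ A : Set X, MeasurableSet A → μ (T ⁻¹' A) = μ A) : μ.map T = μ := by
  apply Measure.ext
  intro A hA
  rw [Measure.map_apply hT.measurable hA]
  exact hinv A hA

lemma integral_comp_iterate {T : X → X} (hT : Continuous T) {μ : Measure X}
    (hinv : ∀ A : Set X, MeasurableSet A → μ (T ⁻¹' A) = μ A) (f : X →ᵇ ℝ) (i : ℕ) :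
    ∫ x, f (T^[i] x) ∂μ = ∫ x, f x ∂μ := by
  induction i with
  | zero => simp
  | succ i ih =>
      have hstep : ∫ x, f (T^[i] (T x)) ∂μ = ∫ y, f (T^[i] y) ∂μ := by
        have hmeas : AEStronglyMeasurable (fun y => f (T^[i] y)) (μ.map T) :=
          (f.continuous.comp (hT.iterate i)).aestronglyMeasurable
        rw [← MeasureTheory.integral_map hT.measurable.aemeasurable hmeas,
          map_eq hT hinv]
      calc ∫ x, f (T^[i+1] x) ∂μ = ∫ x, f (T^[i] (T x)) ∂μ := by
            simp only [Function.iterate_succ_apply]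
        _ = ∫ y, f (T^[i] y) ∂μ := hstep
        _ = ∫ x, f x ∂μ := ih

lemma integrable_comp_iterate {T : X → X} (hT : Continuous T) {μ : Measure X}
    [IsFiniteMeasure μ] (f : X →ᵇ ℝ) (i : ℕ) :
    Integrable (fun x => f (T^[i] x)) μ :=
  (f.compContinuous ⟨T^[i], hT.iterate i⟩).integrable μ

lemma integral_birk {T : X → X} (hT : Continuous T) {μ : Measure X}
    [IsProbabilityMeasure μ]
    (hinv : ∀ A : Set X, MeasurableSet A → μ (T ⁻¹' A) = μ A) (f : X →ᵇ ℝ)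
    {n : ℕ} (hn : 1 ≤ n) :
    ∫ x, birk T (⇑f) n x ∂μ = ∫ x, f x ∂μ := by
  unfold birk
  rw [integral_div]
  rw [MeasureTheory.integral_finset_sum _ (fun i _ => integrable_comp_iterate hT f i)]
  have : ∀ i ∈ Finset.range n, ∫ x, f (T^[i] x) ∂μ = ∫ x, f x ∂μ :=
    fun i _ => integral_comp_iterate hT hinv f i
  rw [Finset.sum_congr rfl this, Finset.sum_const, Finset.card_range, nsmul_eq_mul]
  have hn0 : (n:ℝ) ≠ 0 := by positivity
  field_simp

lemma integral_eq_of_rhoFK {T : X → X} (hT : Continuous T)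
    (h : ∀ x y : X, rhoFK T x y = 0) {μ ν : Measure X}
    [IsProbabilityMeasure μ] [IsProbabilityMeasure ν]
    (hμ : ∀ A : Set X, MeasurableSet A → μ (T ⁻¹' A) = μ A)
    (hν : ∀ A : Set X, MeasurableSet A → ν (T ⁻¹' A) = ν A)
    (f : X →ᵇ ℝ) : ∫ x, f x ∂μ = ∫ x, f x ∂ν := by
  set F : ℕ → X × X → ℝ := fun n p => birk T (⇑f) n p.1 - birk T (⇑f) n p.2 with hF
  have hFcont : ∀ n, Continuous (F n) := fun n =>
    ((birk_continuous hT f n).comp continuous_fst).sub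
      ((birk_continuous hT f n).comp continuous_snd)
  have hFbound : ∀ n, ∀ p : X × X, ‖F n p‖ ≤ ‖f‖ + ‖f‖ := by
    intro n p
    rw [hF]
    simp only [Real.norm_eq_abs]
    have h1 := abs_birk_le f T n p.1
    have h2 := abs_birk_le f T n p.2
    calc |birk T (⇑f) n p.1 - birk T (⇑f) n p.2|
        ≤ |birk T (⇑f) n p.1| + |birk T (⇑f) n p.2| := abs_sub _ _
      _ ≤ ‖f‖ + ‖f‖ := add_le_add h1 h2
  have hFlim : ∀ p : X × X, Tendsto (fun n => F n p) atTop (𝓝 0) := fun p =>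
    birk_diff_tendsto f (h p.1 p.2)
  have hDCT := MeasureTheory.tendsto_integral_of_dominated_convergence
    (μ := μ.prod ν) (F := F) (f := fun _ => (0:ℝ)) (fun _ => ‖f‖ + ‖f‖)
    (fun n => (hFcont n).aestronglyMeasurable)
    (integrable_const _)
    (fun n => Filter.Eventually.of_forall (hFbound n))
    (Filter.Eventually.of_forall hFlim)
  rw [integral_zero] at hDCT
  have hint1 : ∀ n : ℕ, Integrable (fun p : X × X => birk T (⇑f) n p.1) (μ.prod ν) := by
    intro n
    apply Integrable.mono' (integrable_const ‖f‖)
      ((birk_continuous hT f n).comp continuous_fst).aestronglyMeasurable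
    exact Filter.Eventually.of_forall (fun p => by
      rw [Real.norm_eq_abs]; exact abs_birk_le f T n p.1)
  have hint2 : ∀ n : ℕ, Integrable (fun p : X × X => birk T (⇑f) n p.2) (μ.prod ν) := by
    intro n
    apply Integrable.mono' (integrable_const ‖f‖)
      ((birk_continuous hT f n).comp continuous_snd).aestronglyMeasurable
    exact Filter.Eventually.of_forall (fun p => by
      rw [Real.norm_eq_abs]; exact abs_birk_le f T n p.2)
  have hval : ∀ n : ℕ, 1 ≤ n →
      ∫ p, F n p ∂(μ.prod ν) = ∫ x, f x ∂μ - ∫ x, f x ∂ν := by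
    intro n hn
    rw [hF]
    rw [integral_sub (hint1 n) (hint2 n)]
    have e1 : ∫ p, birk T (⇑f) n p.1 ∂(μ.prod ν) = ∫ x, f x ∂μ := by
      rw [MeasureTheory.integral_prod _ (hint1 n)]
      simp only [integral_const, probReal_univ, one_smul]
      exact integral_birk hT hμ f hn
    have e2 : ∫ p, birk T (⇑f) n p.2 ∂(μ.prod ν) = ∫ x, f x ∂ν := by
      rw [MeasureTheory.integral_prod _ (hint2 n)]
      have inner : (∫ y, birk T (⇑f) n y ∂ν) = ∫ x, f x ∂ν :=
        integral_birk hT hν f hn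
      simp only [inner, integral_const, probReal_univ, one_smul]
    rw [e1, e2]
  have hconst : Tendsto (fun _ : ℕ => ∫ x, f x ∂μ - ∫ x, f x ∂ν) atTop (𝓝 0) := by
    apply hDCT.congr'
    filter_upwards [Filter.eventually_ge_atTop 1] with n hn
    exact hval n hn
  have := tendsto_nhds_unique hconst tendsto_const_nhds
  linarith

/-- uniqueness of the invariant probability measure -/
lemma measure_unique {T : X → X} (hT : Continuous T)
    (h : ∀ x y : X, rhoFK T x y = 0) {μ ν : Measure X}
    [IsProbabilityMeasure μ] [IsProbabilityMeasure ν]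
    (hμ : ∀ A : Set X, MeasurableSet A → μ (T ⁻¹' A) = μ A)
    (hν : ∀ A : Set X, MeasurableSet A → ν (T ⁻¹' A) = ν A) : μ = ν := by
  apply MeasureTheory.ext_of_forall_lintegral_eq_of_IsFiniteMeasure
  intro f
  set g : X →ᵇ ℝ :=
    ⟨⟨fun x => ((f x : ℝ≥0) : ℝ), NNReal.continuous_coe.comp f.continuous⟩,
      f.map_bounded'⟩ with hg
  have hgf : ∀ x, (g x : ℝ) = ((f x : ℝ≥0) : ℝ) := fun x => rfl
  have hint : ∀ κ : Measure X, IsProbabilityMeasure κ →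
      Integrable (fun x => ((f x : ℝ≥0) : ℝ)) κ := by
    intro κ hκ
    exact g.integrable κ
  have key := integral_eq_of_rhoFK hT h hμ hν g
  rw [MeasureTheory.lintegral_coe_eq_integral f (hint μ ‹_›),
    MeasureTheory.lintegral_coe_eq_integral f (hint ν ‹_›)]
  congr 1

end Integration

end Unique

end FKAux

/-- every topologically loosely Kronecker TDS is uniquely ergodic. -/
theorem uniquely_ergodic_of_topologically_loosely_Kronecker {X : Type*} [MetricSpace X] [CompactSpace X] [Nonempty X]
    (T : X → X) (hT : Continuous T) [MeasurableSpace X] [BorelSpace X]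
    (h : ∀ x y : X, rhoFK T x y = 0) :
    ∃! μ : Measure X, IsProbabilityMeasure μ ∧
      ∀ A : Set X, MeasurableSet A → μ (T ⁻¹' A) = μ A := by
  obtain ⟨μ0, hprob, hinv⟩ := FKAux.exists_invariant_probabilityMeasure T hT
  refine ⟨μ0, ⟨hprob, hinv⟩, ?_⟩
  rintro ν ⟨hνprob, hνinv⟩
  haveI := hνprob
  haveI := hprob
  exact FKAux.measure_unique hT h hνinv hinv
end
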